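/- arXiv:1309.0747 — 11 statements merged into one kernel-verified Lean document; each statement's English description precedes it below -/
import Mathlib

section
/- Let 0 < p ≤ 1 and let X be a p-normed space, regarded as a metric space with d(x,y) = ‖x−y‖^p. If X coarsely embeds into a real Hilbert space, then X strongly uniformly embeds into a real Hilbert space. -/
open Filter Set

/-- `T` is a coarse embedding between the "metric spaces" given by distance
functions `dX`, `dY`. -/
def IsCoarseEmb {X Y : Type*} (dX : X → X → ℝ) (dY : Y → Y → ℝ) (T : X → Y) : Prop :=
  ∃ ρ₁ ρ₂ : ℝ → ℝ,
    MonotoneOn ρ₁ (Set.Ici 0) ∧ MonotoneOn ρ₂ (Set.Ici 0) ∧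
    (∀ t, 0 ≤ t → 0 ≤ ρ₁ t) ∧ (∀ t, 0 ≤ t → 0 ≤ ρ₂ t) ∧
    Filter.Tendsto ρ₁ Filter.atTop Filter.atTop ∧
    ∀ x y, ρ₁ (dX x y) ≤ dY (T x) (T y) ∧ dY (T x) (T y) ≤ ρ₂ (dX x y)

/-- `T` is a uniform embedding: `T` is injective and both `T` and its inverse on the
image are uniformly continuous. -/
def IsUnifEmb {X Y : Type*} (dX : X → X → ℝ) (dY : Y → Y → ℝ) (T : X → Y) : Prop :=
  Function.Injective T ∧
  (∀ ε > (0 : ℝ), ∃ δ > (0 : ℝ), ∀ x y, dX x y < δ → dY (T x) (T y) < ε) ∧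
  (∀ ε > (0 : ℝ), ∃ δ > (0 : ℝ), ∀ x y, dY (T x) (T y) < δ → dX x y < ε)

universe u

open scoped ENNReal

set_option maxHeartbeats 1000000

open Filter Set


namespace CISU

structure ND (p : ℝ) (X : Type u) [AddCommGroup X] [Module ℝ X] where
  nrm : X → ℝ
  hp0 : 0 < p
  hp1 : p ≤ 1
  nonneg : ∀ x, 0 ≤ nrm x
  zero : ∀ x, nrm x = 0 ↔ x = 0
  smul : ∀ (a : ℝ) (x : X), nrm (a • x) = |a| * nrm x
  tri : ∀ x y, nrm (x + y) ^ p ≤ nrm x ^ p + nrm y ^ p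

namespace ND

variable {p : ℝ} {X : Type u} [AddCommGroup X] [Module ℝ X] (N : ND p X)

noncomputable def d (x y : X) : ℝ := N.nrm (x - y) ^ p

lemma d_nonneg (x y : X) : 0 ≤ N.d x y := Real.rpow_nonneg (N.nonneg _) _

lemma d_self (x : X) : N.d x x = 0 := by
  simp only [d, sub_self]
  rw [(N.zero 0).mpr rfl, Real.zero_rpow (ne_of_gt N.hp0)]

lemma d_symm (x y : X) : N.d x y = N.d y x := by
  have h : y - x = (-1 : ℝ) • (x - y) := by rw [neg_one_smul]; abel
  simp only [d]
  rw [h, N.smul]; norm_num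

lemma d_triangle (x y z : X) : N.d x z ≤ N.d x y + N.d y z := by
  have h : x - z = (x - y) + (y - z) := by abel
  simpa only [d, h] using N.tri (x - y) (y - z)

lemma d_eq_zero_iff (x y : X) : N.d x y = 0 ↔ x = y := by
  simp only [d]
  rw [Real.rpow_eq_zero (N.nonneg _) (ne_of_gt N.hp0), N.zero, sub_eq_zero]

lemma d_smul (a : ℝ) (x y : X) : N.d (a • x) (a • y) = |a| ^ p * N.d x y := by
  simp only [d]
  rw [← smul_sub, N.smul, Real.mul_rpow (abs_nonneg a) (N.nonneg _)]

/-! ### Chains -/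

/-- Sums of chains from `x` to `y` whose steps all have `d ≤ 1`. -/
def chainSums (x y : X) : Set ℝ :=
  { s | ∃ (m : ℕ) (c : ℕ → X), c 0 = x ∧ c m = y ∧ (∀ i < m, N.d (c i) (c (i+1)) ≤ 1) ∧
      s = ∑ i ∈ Finset.range m, N.d (c i) (c (i+1)) }

lemma chainSums_nonneg {x y : X} {s : ℝ} (hs : s ∈ N.chainSums x y) : 0 ≤ s := by
  obtain ⟨m, c, -, -, -, rfl⟩ := hs
  exact Finset.sum_nonneg fun i _ => N.d_nonneg _ _

lemma chainSums_bddBelow (x y : X) : BddBelow (N.chainSums x y) :=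
  ⟨0, fun s hs => N.chainSums_nonneg hs⟩

/-- Iterated triangle inequality along a chain. -/
lemma d_chain_le (m : ℕ) (c : ℕ → X) :
    N.d (c 0) (c m) ≤ ∑ i ∈ Finset.range m, N.d (c i) (c (i+1)) := by
  induction m with
  | zero => simp [N.d_self]
  | succ m ih =>
      rw [Finset.sum_range_succ]
      calc N.d (c 0) (c (m+1)) ≤ N.d (c 0) (c m) + N.d (c m) (c (m+1)) := N.d_triangle _ _ _
      _ ≤ _ := by linarith

/-- A subdivided straight segment chain: `d x y ^ (1/p)` many steps, each of `d`-size ≤ 1. -/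
lemma segment_chain (x y : X) :
    ∃ s ∈ N.chainSums x y, s ≤ (N.d x y) ^ (1/p) + 2 := by
  classical
  set n : ℕ := ⌈(N.d x y) ^ (1/p)⌉₊ + 1 with hn
  have hnpos : (0:ℝ) < n := by positivity
  have hd0 : 0 ≤ N.d x y := N.d_nonneg x y
  have hge : (N.d x y) ^ (1/p) ≤ (n : ℝ) := by
    have := Nat.le_ceil ((N.d x y) ^ (1/p))
    push_cast [hn]
    linarith
  -- each step has d-size (d x y) / n^p ≤ 1
  have hstep : N.d x y / (n:ℝ)^p ≤ 1 := by
    rw [div_le_one (by positivity)]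
    calc N.d x y = ((N.d x y)^(1/p))^p := by
          rw [← Real.rpow_mul hd0, one_div, inv_mul_cancel₀ (ne_of_gt N.hp0), Real.rpow_one]
    _ ≤ (n:ℝ)^p := Real.rpow_le_rpow (Real.rpow_nonneg hd0 _) hge (le_of_lt N.hp0)
  set c : ℕ → X := fun i => x + ((min i n : ℕ) / (n:ℝ)) • (y - x) with hc
  have hc0 : c 0 = x := by simp [hc]
  have hcn : c n = y := by
    simp only [hc, min_self]
    rw [div_self (ne_of_gt hnpos), one_smul]
    abel
  have hstepd : ∀ i < n, N.d (c i) (c (i+1)) = N.d x y / (n:ℝ)^p := by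
    intro i hi
    have h1 : min i n = i := min_eq_left (le_of_lt hi)
    have h2 : min (i+1) n = i + 1 := min_eq_left hi
    have hsub : c (i+1) - c i = ((1:ℝ)/n) • (y - x) := by
      simp only [hc, h1, h2]
      rw [add_sub_add_left_eq_sub, ← sub_smul]
      push_cast
      ring_nf
    have h3 : N.d (c i) (c (i+1)) = ((1:ℝ)/n)^p * N.d y x := by
      rw [N.d_symm, d, hsub, N.smul, abs_of_pos (by positivity),
        Real.mul_rpow (by positivity) (N.nonneg _)]
      rfl
    rw [h3, ← N.d_symm x y, Real.div_rpow (by norm_num) (le_of_lt hnpos), Real.one_rpow,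
      div_mul_eq_mul_div, one_mul]
  refine ⟨∑ i ∈ Finset.range n, N.d (c i) (c (i+1)), ⟨n, c, hc0, hcn, ?_, rfl⟩, ?_⟩
  · intro i hi; rw [hstepd i hi]; exact hstep
  · have : ∑ i ∈ Finset.range n, N.d (c i) (c (i+1)) = n * (N.d x y / (n:ℝ)^p) := by
      rw [Finset.sum_congr rfl fun i hi => hstepd i (Finset.mem_range.mp hi)]
      simp [mul_comm]
    rw [this]
    calc (n:ℝ) * (N.d x y / (n:ℝ)^p) ≤ (n:ℝ) * 1 := by
          apply mul_le_mul_of_nonneg_left hstep (le_of_lt hnpos)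
    _ = (n:ℝ) := mul_one _
    _ ≤ (N.d x y) ^ (1/p) + 2 := by
        have := Nat.ceil_lt_add_one (Real.rpow_nonneg hd0 (1/p))
        push_cast [hn]
        linarith [Nat.le_ceil ((N.d x y) ^ (1/p)), (Nat.ceil_lt_add_one (Real.rpow_nonneg hd0 (1/p)))]

/-- The chain pseudometric. -/
noncomputable def D (x y : X) : ℝ := sInf (N.chainSums x y)

lemma chainSums_nonempty (x y : X) : (N.chainSums x y).Nonempty := by
  obtain ⟨s, hs, -⟩ := N.segment_chain x y
  exact ⟨s, hs⟩

lemma D_nonneg (x y : X) : 0 ≤ N.D x y :=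
  le_csInf (N.chainSums_nonempty x y) fun s hs => N.chainSums_nonneg hs

lemma D_le_of_mem {x y : X} {s : ℝ} (hs : s ∈ N.chainSums x y) : N.D x y ≤ s :=
  csInf_le (N.chainSums_bddBelow x y) hs

lemma D_le_root (x y : X) : N.D x y ≤ (N.d x y) ^ (1/p) + 2 := by
  obtain ⟨s, hs, hle⟩ := N.segment_chain x y
  exact le_trans (N.D_le_of_mem hs) hle

lemma D_self (x : X) : N.D x x = 0 := by
  refine le_antisymm ?_ (N.D_nonneg x x)
  refine N.D_le_of_mem (s := 0) ⟨0, fun _ => x, rfl, rfl, by omega, by simp⟩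

lemma D_le_d {x y : X} (h : N.d x y ≤ 1) : N.D x y ≤ N.d x y := by
  classical
  refine N.D_le_of_mem ⟨1, fun i => if i = 0 then x else y, by simp, by simp, ?_, by simp⟩
  intro i hi
  interval_cases i
  simpa using h

lemma D_symm (x y : X) : N.D x y = N.D y x := by
  have key : ∀ a b : X, N.chainSums a b ⊆ N.chainSums b a := by
    rintro a b s ⟨m, c, hc0, hcm, hstep, rfl⟩
    refine ⟨m, fun i => c (m - i), by simp [hcm], by simp [hc0], ?_, ?_⟩
    · intro i hi
      show N.d (c (m - i)) (c (m - (i+1))) ≤ 1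
      rw [N.d_symm, (by omega : m - i = (m - (i+1)) + 1)]
      exact hstep _ (by omega)
    · rw [← Finset.sum_range_reflect]
      apply Finset.sum_congr rfl
      intro i hi
      have hi' : i < m := Finset.mem_range.mp hi
      show _ = N.d (c (m - i)) (c (m - (i+1)))
      rw [(by omega : m - i = (m - (i+1)) + 1), (by omega : m - (i+1) = m - 1 - i), N.d_symm]
  unfold D
  exact le_antisymm (le_csInf (N.chainSums_nonempty y x) fun s hs => N.D_le_of_mem (key y x hs))
    (le_csInf (N.chainSums_nonempty x y) fun s hs => N.D_le_of_mem (key x y hs))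

lemma D_triangle (x y z : X) : N.D x z ≤ N.D x y + N.D y z := by
  classical
  refine le_of_forall_pos_le_add ?_
  intro ε hε
  obtain ⟨s₁, hs₁, hs₁'⟩ := Real.lt_sInf_add_pos (N.chainSums_nonempty x y) (half_pos hε)
  obtain ⟨s₂, hs₂, hs₂'⟩ := Real.lt_sInf_add_pos (N.chainSums_nonempty y z) (half_pos hε)
  obtain ⟨m₁, c₁, hc₁0, hc₁m, hst₁, rfl⟩ := hs₁
  obtain ⟨m₂, c₂, hc₂0, hc₂m, hst₂, rfl⟩ := hs₂
  set c : ℕ → X := fun i => if i ≤ m₁ then c₁ i else c₂ (i - m₁) with hc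
  have hlow : ∀ i, i ≤ m₁ → c i = c₁ i := by
    intro i hi; simp only [hc]; rw [if_pos hi]
  have hagree : ∀ j, c (m₁ + j) = c₂ j := by
    intro j
    cases j with
    | zero => rw [(by ring : m₁ + 0 = m₁), hlow m₁ le_rfl, hc₁m, hc₂0]
    | succ j =>
        simp only [hc]
        rw [if_neg (by omega), Nat.add_sub_cancel_left]
  have hmem : (∑ i ∈ Finset.range m₁, N.d (c₁ i) (c₁ (i+1))) +
      (∑ i ∈ Finset.range m₂, N.d (c₂ i) (c₂ (i+1))) ∈ N.chainSums x z := by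
    refine ⟨m₁ + m₂, c, by rw [hlow 0 (by omega), hc₁0], by rw [hagree m₂, hc₂m], ?_, ?_⟩
    · intro i hi
      by_cases h : i + 1 ≤ m₁
      · rw [hlow i (by omega), hlow (i+1) h]
        exact hst₁ i (by omega)
      · have hge : m₁ ≤ i := by omega
        obtain ⟨j, rfl⟩ := Nat.exists_eq_add_of_le hge
        rw [hagree j, (by rw [← hagree (j+1)]; ring_nf : c (m₁ + j + 1) = c₂ (j+1))]
        exact hst₂ j (by omega)
    · rw [Finset.sum_range_add]
      congr 1
      · apply Finset.sum_congr rfl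
        intro i hi
        have hi' : i < m₁ := Finset.mem_range.mp hi
        rw [hlow i (by omega), hlow (i+1) (by omega)]
      · apply Finset.sum_congr rfl
        intro j hj
        rw [hagree j, (by rw [← hagree (j+1)]; ring_nf : c (m₁ + j + 1) = c₂ (j+1))]
  calc N.D x z ≤ _ := N.D_le_of_mem hmem
  _ ≤ (N.D x y + ε/2) + (N.D y z + ε/2) := by
      unfold D; exact add_le_add (le_of_lt hs₁') (le_of_lt hs₂')
  _ = N.D x y + N.D y z + ε := by ring

end ND

/-! ### Coarse maps into Hilbert space -/

structure CD {p : ℝ} {X : Type u} [AddCommGroup X] [Module ℝ X] (N : ND p X)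
    (H : Type*) [NormedAddCommGroup H] where
  T : X → H
  ρ₁ : ℝ → ℝ
  ρ₂ : ℝ → ℝ
  mono1 : MonotoneOn ρ₁ (Set.Ici 0)
  mono2 : MonotoneOn ρ₂ (Set.Ici 0)
  nonneg2 : ∀ t, 0 ≤ t → 0 ≤ ρ₂ t
  tendsto1 : Filter.Tendsto ρ₁ Filter.atTop Filter.atTop
  lower : ∀ x y, ρ₁ (N.d x y) ≤ ‖T x - T y‖
  upper : ∀ x y, ‖T x - T y‖ ≤ ρ₂ (N.d x y)

namespace CD

variable {p : ℝ} {X : Type u} [AddCommGroup X] [Module ℝ X] {N : ND p X}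
  {H : Type*} [NormedAddCommGroup H] (c : CD N H)

noncomputable def C1 : ℝ := c.ρ₂ 2 + 1

lemma C1_pos : 0 < c.C1 := by
  have := c.nonneg2 2 (by norm_num)
  simp only [C1]; linarith

lemma upper' {x y : X} (h : N.d x y ≤ 2) : ‖c.T x - c.T y‖ ≤ c.C1 := by
  have h1 := c.upper x y
  have h2 : c.ρ₂ (N.d x y) ≤ c.ρ₂ 2 :=
    c.mono2 (N.d_nonneg x y) (by norm_num : (2:ℝ) ∈ Set.Ici 0) h
  simp only [C1]; linarith

/-- Along a chain with steps of size ≤ 1, `T` grows linearly in the chain length. -/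
lemma T_chain : ∀ (m : ℕ) (cc : ℕ → X), (∀ i < m, N.d (cc i) (cc (i+1)) ≤ 1) →
    ‖c.T (cc 0) - c.T (cc m)‖ ≤ c.C1 * (2 * (∑ i ∈ Finset.range m, N.d (cc i) (cc (i+1))) + 1) := by
  intro m
  induction m using Nat.strong_induction_on with
  | _ m ih =>
    intro cc hcc
    classical
    set s := ∑ i ∈ Finset.range m, N.d (cc i) (cc (i+1)) with hs
    have hs0 : 0 ≤ s := Finset.sum_nonneg fun i _ => N.d_nonneg _ _
    have hC1 := c.C1_pos
    by_cases hs2 : s ≤ 2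
    · have hd : N.d (cc 0) (cc m) ≤ 2 := le_trans (N.d_chain_le m cc) hs2
      have := c.upper' hd
      nlinarith
    · push_neg at hs2
      set P : ℕ → ℝ := fun k => ∑ i ∈ Finset.range k, N.d (cc i) (cc (i+1)) with hP
      have hm0 : 0 < m := by
        rcases Nat.eq_zero_or_pos m with h | h
        · exfalso; rw [hs, h] at hs2; simp at hs2; linarith
        · exact h
      have hcross : ∃ k, k < m ∧ P k ≤ 1 ∧ 1 < P (k+1) := by
        have hQ0 : P 0 ≤ 1 := by rw [hP]; norm_num
        have hPm : ¬ P m ≤ 1 := by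
          push_neg
          have hPms : P m = s := by rw [hP, hs]
          rw [hPms]; linarith
        have hk1 : P (Nat.findGreatest (fun j => P j ≤ 1) m) ≤ 1 :=
          Nat.findGreatest_spec (P := fun j => P j ≤ 1) (Nat.zero_le m) hQ0
        have hkm' : Nat.findGreatest (fun j => P j ≤ 1) m ≤ m :=
          Nat.findGreatest_le m
        have hkm : Nat.findGreatest (fun j => P j ≤ 1) m < m := by
          rcases lt_or_eq_of_le hkm' with h | h
          · exact h
          · exact absurd (h ▸ hk1) hPm
        refine ⟨Nat.findGreatest (fun j => P j ≤ 1) m, hkm, hk1, ?_⟩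
        have hng : ¬ ((fun j => P j ≤ 1) (Nat.findGreatest (fun j => P j ≤ 1) m + 1)) :=
          Nat.findGreatest_is_greatest (P := fun j => P j ≤ 1) (n := m)
            (Nat.lt_succ_self _) (by omega)
        exact not_le.mp hng
      obtain ⟨k, hkm, hk1, hk2⟩ := hcross
      have hstepk : N.d (cc k) (cc (k+1)) ≤ 1 := hcc k hkm
      have hPk1 : P (k+1) ≤ 2 := by
        have : P (k+1) = P k + N.d (cc k) (cc (k+1)) := Finset.sum_range_succ _ k
        linarith
      have hjump : ‖c.T (cc 0) - c.T (cc (k+1))‖ ≤ c.C1 :=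
        c.upper' (le_trans (N.d_chain_le (k+1) cc) hPk1)
      -- suffix chain
      set m' := m - (k+1) with hm'
      set cc' : ℕ → X := fun i => cc (k+1+i) with hcc'
      have hsum2 : ∀ i : ℕ, N.d (cc (k+1+i)) (cc (k+1+i+1)) = N.d (cc' i) (cc' (i+1)) := by
        intro i
        show _ = N.d (cc (k+1+i)) (cc (k+1+(i+1)))
        rw [(by omega : k + 1 + (i+1) = k + 1 + i + 1)]
      have hsplit : s = P (k+1) + ∑ i ∈ Finset.range m', N.d (cc' i) (cc' (i+1)) := by
        have h0 : ∑ i ∈ Finset.range ((k+1) + m'), N.d (cc i) (cc (i+1))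
            = P (k+1) + ∑ i ∈ Finset.range m', N.d (cc (k+1+i)) (cc (k+1+i+1)) := by
          rw [Finset.sum_range_add]
        calc s = ∑ i ∈ Finset.range ((k+1)+m'), N.d (cc i) (cc (i+1)) := by
                rw [hs]; congr 2; omega
        _ = P (k+1) + ∑ i ∈ Finset.range m', N.d (cc (k+1+i)) (cc (k+1+i+1)) := h0
        _ = P (k+1) + ∑ i ∈ Finset.range m', N.d (cc' i) (cc' (i+1)) := by
            congr 1
      have hcc'steps : ∀ i < m', N.d (cc' i) (cc' (i+1)) ≤ 1 := by
        intro i hi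
        show N.d (cc (k+1+i)) (cc (k+1+(i+1))) ≤ 1
        rw [(by omega : k + 1 + (i + 1) = k + 1 + i + 1)]
        exact hcc (k+1+i) (by omega)
      have hih := ih m' (by omega) cc' hcc'steps
      have hcc'0 : cc' 0 = cc (k+1) := rfl
      have hcc'm : cc' m' = cc m := by
        show cc (k+1+m') = cc m
        congr 1; omega
      rw [hcc'0, hcc'm] at hih
      set s' := ∑ i ∈ Finset.range m', N.d (cc' i) (cc' (i+1)) with hs'
      have htri : ‖c.T (cc 0) - c.T (cc m)‖ ≤
          ‖c.T (cc 0) - c.T (cc (k+1))‖ + ‖c.T (cc (k+1)) - c.T (cc m)‖ := by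
        have := norm_sub_le_norm_sub_add_norm_sub (c.T (cc 0)) (c.T (cc (k+1))) (c.T (cc m))
        linarith
      nlinarith

lemma T_growth (x y : X) : ‖c.T x - c.T y‖ ≤ c.C1 * (2 * N.D x y + 1) := by
  have hC1 := c.C1_pos
  refine le_of_forall_pos_le_add ?_
  intro ε hε
  obtain ⟨s, hs, hlt⟩ := Real.lt_sInf_add_pos (N.chainSums_nonempty x y) (div_pos hε (by linarith : (0:ℝ) < 2 * c.C1))
  obtain ⟨m, cc, hcc0, hccm, hsteps, rfl⟩ := hs
  have := c.T_chain m cc hsteps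
  rw [hcc0, hccm] at this
  have hD : (∑ i ∈ Finset.range m, N.d (cc i) (cc (i+1))) < N.D x y + ε / (2 * c.C1) := hlt
  calc ‖c.T x - c.T y‖ ≤ c.C1 * (2 * (∑ i ∈ Finset.range m, N.d (cc i) (cc (i+1))) + 1) := this
  _ ≤ c.C1 * (2 * (N.D x y + ε / (2 * c.C1)) + 1) := by nlinarith
  _ = c.C1 * (2 * N.D x y + 1) + ε := by field_simp; ring

section Hilbert

variable [InnerProductSpace ℝ H] [CompleteSpace H]

noncomputable def M : ℝ := 16 * c.C1^2 + 1

lemma M_pos : 0 < c.M := by have := c.C1_pos; simp only [M]; nlinarith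

lemma M_ge : 16 * c.C1^2 ≤ c.M := by simp only [M]; linarith

/-- The penalized squared distance functional. -/
noncomputable def fterm (x : X) (u : H) (z : X) : ℝ :=
  ‖u - c.T z‖^2 - c.M * (N.D x z)^2

/-- Its supremum over `z`. -/
noncomputable def fE (x : X) (u : H) : ℝ := sSup (Set.range (c.fterm x u))

lemma norm_le_aux (x z : X) (u : H) :
    ‖u - c.T z‖ ≤ ‖u - c.T x‖ + c.C1 * (2 * N.D x z + 1) := by
  have h1 : ‖u - c.T z‖ ≤ ‖u - c.T x‖ + ‖c.T x - c.T z‖ := by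
    have := norm_sub_le_norm_sub_add_norm_sub u (c.T x) (c.T z)
    linarith
  have h2 := c.T_growth x z
  linarith

lemma fterm_le (x : X) (u : H) (z : X) :
    c.fterm x u z ≤ 2 * ‖u - c.T x‖^2 + 4 * c.C1^2 := by
  have h1 := c.norm_le_aux x z u
  have h2 : ‖u - c.T z‖^2 ≤ (‖u - c.T x‖ + c.C1 * (2 * N.D x z + 1))^2 :=
    pow_le_pow_left₀ (norm_nonneg _) h1 2
  have hM := c.M_ge
  have hC := c.C1_pos
  have hD := N.D_nonneg x z
  simp only [fterm]
  nlinarith [sq_nonneg (‖u - c.T x‖ - c.C1 * (2 * N.D x z + 1)),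
    mul_nonneg (by linarith : (0:ℝ) ≤ c.M - 16 * c.C1^2) (sq_nonneg (N.D x z)),
    mul_nonneg (sq_nonneg c.C1) (sq_nonneg (2 * N.D x z - 1))]

lemma fE_bddAbove (x : X) (u : H) : BddAbove (Set.range (c.fterm x u)) := by
  refine ⟨2 * ‖u - c.T x‖^2 + 4 * c.C1^2, ?_⟩
  rintro t ⟨z, rfl⟩
  exact c.fterm_le x u z

lemma fterm_le_fE (x : X) (u : H) (z : X) : c.fterm x u z ≤ c.fE x u :=
  le_csSup (c.fE_bddAbove x u) ⟨z, rfl⟩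

lemma fE_le (x : X) (u : H) {b : ℝ} (hb : ∀ z, c.fterm x u z ≤ b) : c.fE x u ≤ b :=
  csSup_le ⟨_, ⟨x, rfl⟩⟩ (by rintro t ⟨z, rfl⟩; exact hb z)

lemma sq_norm_le_fE (x : X) (u : H) : ‖u - c.T x‖^2 ≤ c.fE x u := by
  have h := c.fterm_le_fE x u x
  simp only [fterm, N.D_self x] at h
  norm_num at h
  exact h

lemma fE_nonneg (x : X) (u : H) : 0 ≤ c.fE x u :=
  le_trans (sq_nonneg _) (c.sq_norm_le_fE x u)

lemma fterm_midpoint (x : X) (u v : H) (z : X) :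
    c.fterm x ((1/2 : ℝ) • (u + v)) z
      = (c.fterm x u z + c.fterm x v z) / 2 - ‖u - v‖^2 / 4 := by
  have hmid : (1/2 : ℝ) • (u + v) - c.T z = (1/2 : ℝ) • ((u - c.T z) + (v - c.T z)) := by
    module
  have hnorm : ‖(1/2 : ℝ) • (u + v) - c.T z‖ = ‖(u - c.T z) + (v - c.T z)‖ / 2 := by
    rw [hmid, norm_smul]
    norm_num
    ring
  have hpar := parallelogram_law_with_norm ℝ (u - c.T z) (v - c.T z)
  have hsub : (u - c.T z) - (v - c.T z) = u - v := by abel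
  rw [hsub] at hpar
  simp only [fterm, hnorm]
  nlinarith [hpar]

lemma fE_midpoint (x : X) (u v : H) :
    c.fE x ((1/2 : ℝ) • (u + v)) ≤ (c.fE x u + c.fE x v) / 2 - ‖u - v‖^2 / 4 := by
  apply c.fE_le
  intro z
  rw [c.fterm_midpoint x u v z]
  have h1 := c.fterm_le_fE x u z
  have h2 := c.fterm_le_fE x v z
  linarith

lemma exists_min (x : X) : ∃ u : H, ∀ v : H, c.fE x u ≤ c.fE x v := by
  classical
  set S := Set.range (c.fE x) with hS
  have hne : S.Nonempty := ⟨_, ⟨c.T x, rfl⟩⟩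
  have hbd : BddBelow S := ⟨0, by rintro t ⟨u, rfl⟩; exact c.fE_nonneg x u⟩
  set m := sInf S with hm
  have hm_le : ∀ u, m ≤ c.fE x u := fun u => csInf_le hbd ⟨u, rfl⟩
  have hseq : ∀ k : ℕ, ∃ u : H, c.fE x u < m + 1/(k+1) := by
    intro k
    obtain ⟨t, ht, hlt⟩ := Real.lt_sInf_add_pos hne
      (by positivity : (0:ℝ) < 1/((k:ℝ)+1))
    obtain ⟨u, rfl⟩ := ht
    exact ⟨u, hlt⟩
  choose seq hseq using hseq
  have key : ∀ j k : ℕ, ‖seq j - seq k‖^2 ≤ 2 * (1/((j:ℝ)+1) + 1/((k:ℝ)+1)) := by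
    intro j k
    have h1 := c.fE_midpoint x (seq j) (seq k)
    have h2 := hm_le ((1/2 : ℝ) • (seq j + seq k))
    have h3 := hseq j
    have h4 := hseq k
    linarith
  have hcauchy : CauchySeq seq := by
    rw [Metric.cauchySeq_iff]
    intro ε hε
    obtain ⟨K, hK⟩ := exists_nat_gt (4/ε^2)
    refine ⟨K, fun a ha b hb => ?_⟩
    have h4K : 4/ε^2 < (K:ℝ) + 1 := by
      have : (K:ℝ) ≤ (K:ℝ) + 1 := by linarith
      linarith
    have hinva : 1/((a:ℝ)+1) ≤ 1/((K:ℝ)+1) := by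
      apply one_div_le_one_div_of_le (by positivity)
      have : (K:ℝ) ≤ (a:ℝ) := Nat.cast_le.mpr ha
      linarith
    have hinvb : 1/((b:ℝ)+1) ≤ 1/((K:ℝ)+1) := by
      apply one_div_le_one_div_of_le (by positivity)
      have : (K:ℝ) ≤ (b:ℝ) := Nat.cast_le.mpr hb
      linarith
    have hsq : ‖seq a - seq b‖^2 < ε^2 := by
      have h1 := key a b
      have h2 : 4 * (1/((K:ℝ)+1)) < ε^2 := by
        rw [mul_one_div, div_lt_iff₀ (by positivity : (0:ℝ) < (K:ℝ)+1)]
        rw [div_lt_iff₀ (by positivity : (0:ℝ) < ε^2)] at h4K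
        nlinarith
      linarith [hinva, hinvb]
    rw [dist_eq_norm]
    exact lt_of_pow_lt_pow_left₀ 2 (le_of_lt hε) hsq
  obtain ⟨uinf, huinf⟩ := cauchySeq_tendsto_of_complete hcauchy
  refine ⟨uinf, fun v => le_trans ?_ (hm_le v)⟩
  apply c.fE_le
  intro z
  have hcont : Filter.Tendsto (fun k => c.fterm x (seq k) z) Filter.atTop
      (nhds (c.fterm x uinf z)) := by
    simp only [fterm]
    exact (((huinf.sub_const (c.T z)).norm.pow 2).sub_const _)
  have hub : ∀ k : ℕ, c.fterm x (seq k) z ≤ m + 1/((k:ℝ)+1) :=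
    fun k => le_trans (c.fterm_le_fE x (seq k) z) (le_of_lt (hseq k))
  have hlim : Filter.Tendsto (fun k : ℕ => m + 1/((k:ℝ)+1)) Filter.atTop (nhds m) := by
    have h0 : Filter.Tendsto (fun k : ℕ => 1/((k:ℝ)+1)) Filter.atTop (nhds 0) :=
      tendsto_one_div_add_atTop_nhds_zero_nat
    have := (tendsto_const_nhds (x := m) (f := Filter.atTop (α := ℕ))).add h0
    simpa using this
  exact le_of_tendsto_of_tendsto hcont hlim (Filter.Eventually.of_forall hub)

/-- The regularized map. -/
noncomputable def Phi (x : X) : H := Classical.choose (c.exists_min x)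

lemma Phi_spec (x : X) (v : H) : c.fE x (c.Phi x) ≤ c.fE x v :=
  Classical.choose_spec (c.exists_min x) v

/-- minimum value -/
noncomputable def mval (x : X) : ℝ := c.fE x (c.Phi x)

lemma mval_nonneg (x : X) : 0 ≤ c.mval x := c.fE_nonneg x _

lemma mval_le (x : X) : c.mval x ≤ 2 * c.C1^2 := by
  refine le_trans (c.Phi_spec x (c.T x)) (c.fE_le x (c.T x) ?_)
  intro z
  have h1 := c.T_growth x z
  have h2 : ‖c.T x - c.T z‖^2 ≤ (c.C1 * (2 * N.D x z + 1))^2 :=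
    pow_le_pow_left₀ (norm_nonneg _) h1 2
  have hM := c.M_ge
  have hC := c.C1_pos
  have hD := N.D_nonneg x z
  simp only [fterm]
  nlinarith [h2, mul_nonneg (sq_nonneg c.C1) (sq_nonneg (6 * N.D x z - 1)),
    mul_nonneg (by linarith : (0:ℝ) ≤ c.M - 16 * c.C1^2) (sq_nonneg (N.D x z))]

lemma Phi_close (x : X) : ‖c.Phi x - c.T x‖ ≤ 2 * c.C1 := by
  have h1 := c.sq_norm_le_fE x (c.Phi x)
  have h2 := c.mval_le x
  have hC := c.C1_pos
  have h3 : c.fE x (c.Phi x) = c.mval x := rfl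
  nlinarith [norm_nonneg (c.Phi x - c.T x)]

lemma fE_Phi_other {x y : X} (h1 : N.D x y ≤ 1) :
    c.fE y (c.Phi x) ≤ c.mval x + 8 * c.M * N.D x y := by
  have hδ : 0 ≤ N.D x y := N.D_nonneg x y
  have hM := c.M_pos
  have hC := c.C1_pos
  apply c.fE_le
  intro z
  by_cases ht : c.fterm y (c.Phi x) z ≤ 0
  · have := c.mval_nonneg x
    nlinarith
  · push_neg at ht
    set a := ‖c.Phi x - c.T z‖ with ha
    set b := N.D y z with hb
    set e := N.D x z with he
    have hbnn : 0 ≤ b := N.D_nonneg y z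
    have henn : 0 ≤ e := N.D_nonneg x z
    have hann : 0 ≤ a := norm_nonneg _
    -- the coefficient bound : a ≤ 6C1 + 2C1*b
    have hPT : ‖c.Phi x - c.T y‖ ≤ 5 * c.C1 := by
      have h3 : ‖c.Phi x - c.T y‖ ≤ ‖c.Phi x - c.T x‖ + ‖c.T x - c.T y‖ := by
        have := norm_sub_le_norm_sub_add_norm_sub (c.Phi x) (c.T x) (c.T y)
        linarith
      have h4 := c.Phi_close x
      have h5 := c.T_growth x y
      nlinarith [mul_nonneg (le_of_lt hC) (by linarith : (0:ℝ) ≤ 1 - N.D x y)]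
    have haux : a ≤ 6 * c.C1 + 2 * c.C1 * b := by
      have h3 : a ≤ ‖c.Phi x - c.T y‖ + ‖c.T y - c.T z‖ := by
        rw [ha]
        have := norm_sub_le_norm_sub_add_norm_sub (c.Phi x) (c.T y) (c.T z)
        linarith
      have h5 := c.T_growth y z
      nlinarith
    -- from positivity of the term : M b² < a²
    have hMb : c.M * b^2 < a^2 := by
      have : c.fterm y (c.Phi x) z = a^2 - c.M * b^2 := rfl
      rw [this] at ht
      linarith
    -- conclude b ≤ 3
    have hb3 : b ≤ 3 := by
      by_contra hb3
      push_neg at hb3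
      have hsq : a^2 ≤ (6 * c.C1 + 2 * c.C1 * b)^2 := pow_le_pow_left₀ hann haux 2
      have hMeq : c.M = 16 * c.C1^2 + 1 := rfl
      rw [hMeq] at hMb
      nlinarith [hsq, sq_nonneg b,
        mul_nonneg (mul_nonneg (sq_nonneg c.C1) (by linarith : (0:ℝ) ≤ b - 3))
          (by linarith : (0:ℝ) ≤ b + 1)]
    have he4 : e ≤ b + N.D x y := by
      rw [he, hb]
      calc N.D x z ≤ N.D x y + N.D y z := N.D_triangle x y z
      _ = N.D y z + N.D x y := by ring
    have hb_ge : e - N.D x y ≤ b := by linarith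
    -- b² ≥ e² - 2 δ e
    have hDD : e^2 - 2 * (N.D x y) * e ≤ b^2 := by
      rcases le_or_gt (N.D x y) e with hcase | hcase
      · nlinarith [sq_nonneg (b - (e - N.D x y))]
      · nlinarith
    -- main term bound
    have hkey : a^2 - c.M * e^2 ≤ c.mval x := by
      have : c.fterm x (c.Phi x) z = a^2 - c.M * e^2 := rfl
      rw [← this]
      exact c.fterm_le_fE x (c.Phi x) z
    have he_le : e ≤ 4 := by linarith
    have hrw : c.fterm y (c.Phi x) z = a^2 - c.M * b^2 := rfl
    rw [hrw]
    have hstep1 : c.M * (e^2 - 2 * N.D x y * e) ≤ c.M * b^2 :=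
      mul_le_mul_of_nonneg_left hDD (le_of_lt hM)
    have hstep2 : (2 * c.M * N.D x y) * e ≤ (2 * c.M * N.D x y) * 4 :=
      mul_le_mul_of_nonneg_left he_le
        (mul_nonneg (by linarith : (0:ℝ) ≤ 2 * c.M) hδ)
    nlinarith [hstep1, hstep2, hkey]

lemma Phi_holder {x y : X} (h1 : N.D x y ≤ 1) :
    ‖c.Phi x - c.Phi y‖^2 ≤ 32 * c.M * N.D x y := by
  have hxy := c.fE_Phi_other h1
  have hyx := c.fE_Phi_other (x := y) (y := x) (by rwa [N.D_symm])
  rw [N.D_symm y x] at hyx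
  have hmid := c.fE_midpoint y (c.Phi x) (c.Phi y)
  have hspec := c.Phi_spec y ((1/2 : ℝ) • (c.Phi x + c.Phi y))
  have hspec2 := c.Phi_spec x (c.Phi y)
  -- mval y ≤ fE y mid ≤ (fE y (Phi x) + mval y)/2 - ‖Phi x - Phi y‖²/4
  have h2 : c.mval y ≤ (c.fE y (c.Phi x) + c.mval y) / 2 - ‖c.Phi x - c.Phi y‖^2 / 4 := by
    calc c.mval y ≤ c.fE y ((1/2 : ℝ) • (c.Phi x + c.Phi y)) := hspec
    _ ≤ (c.fE y (c.Phi x) + c.fE y (c.Phi y)) / 2 - ‖c.Phi x - c.Phi y‖^2 / 4 := hmid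
    _ = (c.fE y (c.Phi x) + c.mval y) / 2 - ‖c.Phi x - c.Phi y‖^2 / 4 := rfl
  have h3 : c.mval x ≤ c.mval y + 8 * c.M * N.D x y := le_trans hspec2 hyx
  linarith

lemma Phi_lower (x y : X) :
    c.ρ₁ (N.d x y) - 4 * c.C1 ≤ ‖c.Phi x - c.Phi y‖ := by
  have h1 := c.lower x y
  have h2 : ‖c.T x - c.T y‖ ≤ ‖c.T x - c.Phi x‖ + ‖c.Phi x - c.T y‖ := by
    have := norm_sub_le_norm_sub_add_norm_sub (c.T x) (c.Phi x) (c.T y)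
    linarith
  have h3 : ‖c.Phi x - c.T y‖ ≤ ‖c.Phi x - c.Phi y‖ + ‖c.Phi y - c.T y‖ := by
    have := norm_sub_le_norm_sub_add_norm_sub (c.Phi x) (c.Phi y) (c.T y)
    linarith
  have h4 := c.Phi_close x
  have h5 := c.Phi_close y
  have h6 : ‖c.T x - c.Phi x‖ = ‖c.Phi x - c.T x‖ := norm_sub_rev _ _
  linarith

lemma Phi_upper (x y : X) :
    ‖c.Phi x - c.Phi y‖ ≤ 9 * c.C1 + 2 * c.C1 * (N.d x y)^(1/p) := by
  have h2 : ‖c.Phi x - c.Phi y‖ ≤ ‖c.Phi x - c.T x‖ + ‖c.T x - c.Phi y‖ := by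
    have := norm_sub_le_norm_sub_add_norm_sub (c.Phi x) (c.T x) (c.Phi y)
    linarith
  have h3 : ‖c.T x - c.Phi y‖ ≤ ‖c.T x - c.T y‖ + ‖c.T y - c.Phi y‖ := by
    have := norm_sub_le_norm_sub_add_norm_sub (c.T x) (c.T y) (c.Phi y)
    linarith
  have h4 := c.Phi_close x
  have h5 := c.Phi_close y
  have h6 := c.T_growth x y
  have h7 := N.D_le_root x y
  have h8 : ‖c.T y - c.Phi y‖ = ‖c.Phi y - c.T y‖ := norm_sub_rev _ _
  have hC := c.C1_pos
  nlinarith [N.D_nonneg x y]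

end Hilbert

section Assembly

/-- scaling factors : `mu p n = (2^n)^(1/p)`, so that `d (mu n • x) (mu n • y) = 2^n * d x y`. -/
noncomputable def muf (p : ℝ) (n : ℕ) : ℝ := ((2:ℝ)^n)^(1/p)

lemma muf_nonneg (p : ℝ) (n : ℕ) : 0 ≤ muf p n := Real.rpow_nonneg (by positivity) _

lemma muf_zero (p : ℝ) : muf p 0 = 1 := by
  simp only [muf, pow_zero, Real.one_rpow]

/-- the ℓ²-weights. -/
noncomputable def wtf (p : ℝ) (n : ℕ) : ℝ := (1/2:ℝ)^n * (1 + muf p n)⁻¹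

lemma wtf_pos (p : ℝ) (n : ℕ) : 0 < wtf p n := by
  have := muf_nonneg p n
  have h1 : (0:ℝ) < 1 + muf p n := by linarith
  simp only [wtf]
  positivity

lemma wtf_le_one (p : ℝ) (n : ℕ) : wtf p n ≤ 1 := by
  have := muf_nonneg p n
  have h1 : (1:ℝ) ≤ 1 + muf p n := by linarith
  simp only [wtf]
  calc (1/2:ℝ)^n * (1 + muf p n)⁻¹ ≤ 1 * 1 := by
        apply mul_le_mul
        · exact pow_le_one₀ (by norm_num) (by norm_num)
        · exact inv_le_one_of_one_le₀ h1
        · positivity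
        · norm_num
  _ = 1 := by norm_num

lemma wtf_zero (p : ℝ) : wtf p 0 = 1/2 := by
  simp only [wtf, pow_zero, muf_zero]
  norm_num

variable [InnerProductSpace ℝ H] [CompleteSpace H]

omit [InnerProductSpace ℝ H] [CompleteSpace H] in
lemma d_muf (n : ℕ) (x y : X) :
    N.d (muf p n • x) (muf p n • y) = 2^n * N.d x y := by
  rw [N.d_smul]
  congr 1
  rw [abs_of_nonneg (muf_nonneg p n)]
  simp only [muf]
  rw [← Real.rpow_mul (by positivity), one_div,
    inv_mul_cancel₀ (ne_of_gt N.hp0), Real.rpow_one]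

omit [InnerProductSpace ℝ H] [CompleteSpace H] in
lemma root_d_muf (n : ℕ) (x y : X) :
    (N.d (muf p n • x) (muf p n • y))^(1/p) = muf p n * (N.d x y)^(1/p) := by
  rw [d_muf n x y]
  have h2n : ((2:ℝ)^n) ^ (1/p) = muf p n := rfl
  rw [show ((2:ℝ)^n : ℝ) * N.d x y = ((2:ℝ)^n) * N.d x y from rfl,
    Real.mul_rpow (by positivity) (N.d_nonneg x y), h2n]

/-- The component-wise bound for the assembled map. -/
lemma comp_bound (x y : X) (n : ℕ) :
    wtf p n * ‖c.Phi (muf p n • x) - c.Phi (muf p n • y)‖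
      ≤ (1/2:ℝ)^n * (9 * c.C1 + 2 * c.C1 * (N.d x y)^(1/p)) := by
  have h1 := c.Phi_upper (muf p n • x) (muf p n • y)
  rw [root_d_muf n x y] at h1
  have hμ := muf_nonneg p n
  have hC := c.C1_pos
  have ht : (0:ℝ) ≤ (N.d x y)^(1/p) := Real.rpow_nonneg (N.d_nonneg x y) _
  have h2 : (1 + muf p n)⁻¹ * ‖c.Phi (muf p n • x) - c.Phi (muf p n • y)‖
      ≤ 9 * c.C1 + 2 * c.C1 * (N.d x y)^(1/p) := by
    rw [inv_mul_le_iff₀ (by linarith : (0:ℝ) < 1 + muf p n)]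
    calc ‖c.Phi (muf p n • x) - c.Phi (muf p n • y)‖
        ≤ 9 * c.C1 + 2 * c.C1 * (muf p n * (N.d x y)^(1/p)) := h1
    _ ≤ (9 * c.C1 + 2 * c.C1 * (N.d x y)^(1/p)) * (1 + muf p n) := by
          nlinarith [mul_nonneg (le_of_lt hC) ht, mul_nonneg (le_of_lt hC) hμ]
    _ = (1 + muf p n) * (9 * c.C1 + 2 * c.C1 * (N.d x y)^(1/p)) := by ring
  have h3 : wtf p n * ‖c.Phi (muf p n • x) - c.Phi (muf p n • y)‖
      = (1/2:ℝ)^n * ((1 + muf p n)⁻¹ * ‖c.Phi (muf p n • x) - c.Phi (muf p n • y)‖) := by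
    simp only [wtf]; ring
  rw [h3]
  apply mul_le_mul_of_nonneg_left h2 (by positivity)

/-- The assembled function. -/
noncomputable def Sfun (x : X) : ∀ _ : ℕ, H :=
  fun n => wtf p n • (c.Phi (muf p n • x) - c.Phi 0)

lemma Sfun_norm_le (x y : X) (n : ℕ) :
    ‖c.Sfun x n - c.Sfun y n‖
      ≤ (1/2:ℝ)^n * (9 * c.C1 + 2 * c.C1 * (N.d x y)^(1/p)) := by
  have h0 : c.Sfun x n - c.Sfun y n
      = wtf p n • (c.Phi (muf p n • x) - c.Phi (muf p n • y)) := by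
    simp only [Sfun, ← smul_sub]
    congr 1
    abel
  rw [h0, norm_smul, Real.norm_eq_abs, abs_of_pos (wtf_pos p n)]
  exact c.comp_bound x y n

lemma Sfun_zero_eq (n : ℕ) : c.Sfun 0 n = 0 := by
  simp only [Sfun, smul_zero, sub_self]

lemma Sfun_mem (x : X) : Memℓp (c.Sfun x) 2 := by
  apply memℓp_gen
  have hconv : ∀ n : ℕ, ‖c.Sfun x n‖ ^ (2:ℝ≥0∞).toReal = ‖c.Sfun x n‖^2 := by
    intro n; norm_num
  simp only [hconv]
  set A := 9 * c.C1 + 2 * c.C1 * (N.d x 0)^(1/p) with hA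
  have hgeo : Summable (fun n : ℕ => A^2 * ((1/4:ℝ))^n) :=
    (summable_geometric_of_lt_one (by norm_num) (by norm_num)).mul_left _
  apply Summable.of_nonneg_of_le (fun n => by positivity) _ hgeo
  intro n
  have h1 : ‖c.Sfun x n‖ ≤ (1/2:ℝ)^n * A := by
    have := c.Sfun_norm_le x 0 n
    simp only [c.Sfun_zero_eq, sub_zero] at this
    exact this
  have h2 : ‖c.Sfun x n‖^2 ≤ ((1/2:ℝ)^n * A)^2 :=
    pow_le_pow_left₀ (norm_nonneg _) h1 2
  calc ‖c.Sfun x n‖^2 ≤ ((1/2:ℝ)^n * A)^2 := h2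
  _ = A^2 * (((1/2:ℝ)^n)^2) := by ring
  _ = A^2 * (((1/2:ℝ)^2)^n) := by rw [← pow_mul, ← pow_mul, Nat.mul_comm]
  _ = A^2 * ((1/4:ℝ))^n := by norm_num

/-- The strong uniform embedding. -/
noncomputable def S (x : X) : lp (fun _ : ℕ => H) 2 := ⟨c.Sfun x, c.Sfun_mem x⟩

lemma S_apply (x : X) (n : ℕ) : (c.S x : ∀ _ : ℕ, H) n = c.Sfun x n := rfl

lemma S_sub_apply (x y : X) (n : ℕ) :
    ((c.S x - c.S y : lp (fun _ : ℕ => H) 2) : ∀ _ : ℕ, H) n = c.Sfun x n - c.Sfun y n := by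
  rw [lp.coeFn_sub]
  rfl

lemma lp_norm_sq (g : lp (fun _ : ℕ => H) 2) :
    ‖g‖^2 = ∑' n, ‖(g : ∀ _ : ℕ, H) n‖^2 := by
  have h := lp.norm_rpow_eq_tsum (p := 2) (by norm_num) g
  have h1 : ‖g‖ ^ (2:ℝ≥0∞).toReal = ‖g‖^2 := by norm_num
  have h2 : ∀ n : ℕ, ‖(g : ∀ _ : ℕ, H) n‖ ^ (2:ℝ≥0∞).toReal = ‖(g : ∀ _ : ℕ, H) n‖^2 := by
    intro n; norm_num
  rw [h1] at h
  simp only [h2] at h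
  exact h

lemma lp_summable_sq (g : lp (fun _ : ℕ => H) 2) :
    Summable (fun n => ‖(g : ∀ _ : ℕ, H) n‖^2) := by
  have h := (lp.memℓp g).summable (p := 2) (by norm_num)
  have h2 : ∀ n : ℕ, ‖(g : ∀ _ : ℕ, H) n‖ ^ (2:ℝ≥0∞).toReal = ‖(g : ∀ _ : ℕ, H) n‖^2 := by
    intro n; norm_num
  simpa only [h2] using h

lemma half_pow_sq (B : ℝ) (n : ℕ) : ((1/2:ℝ)^n * B)^2 = B^2 * (1/4:ℝ)^n := by
  calc ((1/2:ℝ)^n * B)^2 = B^2 * (((1/2:ℝ)^n)^2) := by ring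
  _ = B^2 * (((1/2:ℝ)^2)^n) := by rw [← pow_mul, ← pow_mul, Nat.mul_comm]
  _ = B^2 * ((1/4:ℝ))^n := by norm_num

lemma Sfun_sub_eq (x y : X) (n : ℕ) :
    c.Sfun x n - c.Sfun y n = wtf p n • (c.Phi (muf p n • x) - c.Phi (muf p n • y)) := by
  simp only [Sfun, ← smul_sub]
  congr 1
  abel

lemma Sfun_sub_norm (x y : X) (n : ℕ) :
    ‖c.Sfun x n - c.Sfun y n‖ = wtf p n * ‖c.Phi (muf p n • x) - c.Phi (muf p n • y)‖ := by
  rw [c.Sfun_sub_eq, norm_smul, Real.norm_eq_abs, abs_of_pos (wtf_pos p n)]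

lemma S_dist_le (x y : X) :
    ‖c.S x - c.S y‖ ≤ 2 * (9 * c.C1 + 2 * c.C1 * (N.d x y)^(1/p)) := by
  have hC := c.C1_pos
  have ht : (0:ℝ) ≤ (N.d x y)^(1/p) := Real.rpow_nonneg (N.d_nonneg x y) _
  set B := 9 * c.C1 + 2 * c.C1 * (N.d x y)^(1/p) with hB
  have hBnn : 0 ≤ B := by positivity
  have hterm : ∀ n : ℕ, ‖((c.S x - c.S y : lp (fun _ : ℕ => H) 2) : ∀ _ : ℕ, H) n‖^2
      ≤ B^2 * (1/4:ℝ)^n := by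
    intro n
    rw [c.S_sub_apply]
    have h1 := c.Sfun_norm_le x y n
    have h2 : ‖c.Sfun x n - c.Sfun y n‖^2 ≤ ((1/2:ℝ)^n * B)^2 :=
      pow_le_pow_left₀ (norm_nonneg _) h1 2
    rw [half_pow_sq] at h2
    exact h2
  have hsum := lp_summable_sq (c.S x - c.S y)
  clear_value B
  have hgeo : Summable (fun n : ℕ => B^2 * (1/4:ℝ)^n) :=
    (summable_geometric_of_lt_one (by norm_num) (by norm_num)).mul_left _
  have h1 : ‖c.S x - c.S y‖^2 ≤ B^2 * (4/3 : ℝ) := by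
    rw [lp_norm_sq]
    calc ∑' n, ‖((c.S x - c.S y : lp (fun _ : ℕ => H) 2) : ∀ _ : ℕ, H) n‖^2
        ≤ ∑' n, B^2 * (1/4:ℝ)^n := Summable.tsum_le_tsum hterm hsum hgeo
    _ = B^2 * ∑' n : ℕ, (1/4:ℝ)^n := tsum_mul_left
    _ = B^2 * (1 - 1/4:ℝ)⁻¹ := by rw [tsum_geometric_of_lt_one (by norm_num) (by norm_num)]
    _ = B^2 * (4/3:ℝ) := by norm_num
  have h2 : ‖c.S x - c.S y‖^2 ≤ (2*B)^2 := by
    rw [show ((2:ℝ)*B)^2 = B^2 * 4 from by ring]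
    nlinarith [h1, sq_nonneg B]
  exact le_of_pow_le_pow_left₀ (by norm_num) (by linarith : (0:ℝ) ≤ 2*B) h2

lemma comp_le_S (x y : X) (n : ℕ) :
    ‖c.Sfun x n - c.Sfun y n‖ ≤ ‖c.S x - c.S y‖ := by
  have h := lp.norm_apply_le_norm (by norm_num : (2:ℝ≥0∞) ≠ 0) (c.S x - c.S y) n
  rwa [c.S_sub_apply] at h

lemma muf_zero_smul (x : X) : muf p 0 • x = x := by
  rw [muf_zero, one_smul]

lemma S_lower (x y : X) :
    (c.ρ₁ (N.d x y) - 4 * c.C1) / 2 ≤ ‖c.S x - c.S y‖ := by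
  have h0 := c.comp_le_S x y 0
  rw [c.Sfun_sub_norm, wtf_zero, muf_zero_smul, muf_zero_smul] at h0
  have h1 := c.Phi_lower x y
  linarith

lemma S_sep {x y : X} {n : ℕ} (h : 4 * c.C1 + 1 ≤ c.ρ₁ (2^n * N.d x y)) :
    wtf p n ≤ ‖c.S x - c.S y‖ := by
  have h0 := c.comp_le_S x y n
  rw [c.Sfun_sub_norm] at h0
  have h1 := c.Phi_lower (muf p n • x) (muf p n • y)
  rw [d_muf] at h1
  have h2 : 1 ≤ ‖c.Phi (muf p n • x) - c.Phi (muf p n • y)‖ := by linarith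
  have h3 := wtf_pos p n
  nlinarith

lemma S_forward : ∀ ε > (0:ℝ), ∃ δ > (0:ℝ), ∀ x y : X,
    N.d x y < δ → ‖c.S x - c.S y‖ < ε := by
  intro ε hε
  have hC := c.C1_pos
  have hM := c.M_pos
  -- choose the tail cutoff
  have hε2' : (0:ℝ) < ε^2/2 := by have := pow_pos hε 2; linarith
  obtain ⟨N₀, hN₀⟩ := exists_pow_lt_of_lt_one
    (div_pos hε2' (by positivity) : (0:ℝ) < (ε^2/2) / ((11*c.C1)^2 + 1))
    (by norm_num : (1/4:ℝ) < 1)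
  set K := (N₀+1 : ℝ) * (32 * c.M) * 2^N₀ with hK
  have hKpos : 0 < K := by
    rw [hK]
    exact mul_pos (mul_pos (by positivity) (by linarith)) (by positivity)
  have hε2 : (0:ℝ) < ε^2/2 := by have := pow_pos hε 2; linarith
  refine ⟨min ((1/2:ℝ)^N₀) ((ε^2/2) / (K + 1)),
    lt_min (by positivity) (div_pos hε2 (by linarith : (0:ℝ) < K + 1)), ?_⟩
  intro x y hd
  have hd0 := N.d_nonneg x y
  have hd1 : N.d x y ≤ 1 := by
    have h1 : N.d x y < (1/2:ℝ)^N₀ := lt_of_lt_of_le hd (min_le_left _ _)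
    have h2 : ((1/2:ℝ))^N₀ ≤ 1 := pow_le_one₀ (by norm_num) (by norm_num)
    linarith
  have hdK : N.d x y < (ε^2/2) / (K + 1) := lt_of_lt_of_le hd (min_le_right _ _)
  -- head bound
  have hhead : ∀ n ∈ Finset.range (N₀+1),
      ‖((c.S x - c.S y : lp (fun _ : ℕ => H) 2) : ∀ _ : ℕ, H) n‖^2
        ≤ 32 * c.M * 2^N₀ * N.d x y := by
    intro n hn
    have hn' : n ≤ N₀ := by
      have := Finset.mem_range.mp hn; omega
    rw [c.S_sub_apply, c.Sfun_sub_norm]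
    have h2nd : (2:ℝ)^n * N.d x y ≤ 1 := by
      have hpow : (2:ℝ)^n ≤ 2^N₀ := pow_le_pow_right₀ (by norm_num) hn'
      have h1 : (2:ℝ)^n * N.d x y ≤ 2^N₀ * N.d x y :=
        mul_le_mul_of_nonneg_right hpow hd0
      have h2 : (2:ℝ)^N₀ * N.d x y < 2^N₀ * (1/2:ℝ)^N₀ :=
        mul_lt_mul_of_pos_left (lt_of_lt_of_le hd (min_le_left _ _)) (by positivity)
      have h3 : (2:ℝ)^N₀ * (1/2:ℝ)^N₀ = 1 := by
        rw [← mul_pow]; norm_num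
      linarith
    have hDle : N.D (muf p n • x) (muf p n • y) ≤ 2^n * N.d x y := by
      have := N.D_le_d (x := muf p n • x) (y := muf p n • y) (by rw [d_muf]; exact h2nd)
      rwa [d_muf] at this
    have hD1 : N.D (muf p n • x) (muf p n • y) ≤ 1 := le_trans hDle h2nd
    have hhol := c.Phi_holder hD1
    have hwt : wtf p n * ‖c.Phi (muf p n • x) - c.Phi (muf p n • y)‖
        ≤ ‖c.Phi (muf p n • x) - c.Phi (muf p n • y)‖ :=
      mul_le_of_le_one_left (norm_nonneg _) (wtf_le_one p n)
    have hsq : (wtf p n * ‖c.Phi (muf p n • x) - c.Phi (muf p n • y)‖)^2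
        ≤ ‖c.Phi (muf p n • x) - c.Phi (muf p n • y)‖^2 := by
      apply pow_le_pow_left₀ (mul_nonneg (le_of_lt (wtf_pos p n)) (norm_nonneg _)) hwt
    have hpow : (2:ℝ)^n ≤ 2^N₀ := pow_le_pow_right₀ (by norm_num) hn'
    calc (wtf p n * ‖c.Phi (muf p n • x) - c.Phi (muf p n • y)‖)^2
        ≤ ‖c.Phi (muf p n • x) - c.Phi (muf p n • y)‖^2 := hsq
    _ ≤ 32 * c.M * N.D (muf p n • x) (muf p n • y) := hhol
    _ ≤ 32 * c.M * (2^n * N.d x y) := by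
        apply mul_le_mul_of_nonneg_left hDle (by linarith)
    _ ≤ 32 * c.M * 2^N₀ * N.d x y := by
        rw [mul_assoc (32 * c.M)]
        apply mul_le_mul_of_nonneg_left _ (by linarith : (0:ℝ) ≤ 32 * c.M)
        exact mul_le_mul_of_nonneg_right hpow hd0
  -- tail bound
  have htail : ∀ i : ℕ,
      ‖((c.S x - c.S y : lp (fun _ : ℕ => H) 2) : ∀ _ : ℕ, H) (i + (N₀+1))‖^2
        ≤ (11*c.C1)^2 * ((1/4:ℝ)^(N₀+1) * (1/4:ℝ)^i) := by
    intro i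
    rw [c.S_sub_apply]
    have h1 := c.Sfun_norm_le x y (i + (N₀+1))
    have hroot : (N.d x y)^(1/p) ≤ 1 :=
      Real.rpow_le_one hd0 hd1 (one_div_nonneg.mpr (le_of_lt N.hp0))
    have hB : 9 * c.C1 + 2 * c.C1 * (N.d x y)^(1/p) ≤ 11 * c.C1 := by nlinarith
    have h2 : ‖c.Sfun x (i + (N₀+1)) - c.Sfun y (i + (N₀+1))‖
        ≤ (1/2:ℝ)^(i + (N₀+1)) * (11 * c.C1) := by
      calc ‖c.Sfun x (i + (N₀+1)) - c.Sfun y (i + (N₀+1))‖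
          ≤ (1/2:ℝ)^(i + (N₀+1)) * (9 * c.C1 + 2 * c.C1 * (N.d x y)^(1/p)) := h1
      _ ≤ (1/2:ℝ)^(i + (N₀+1)) * (11 * c.C1) := by
          apply mul_le_mul_of_nonneg_left hB (by positivity)
    have h3 : ‖c.Sfun x (i + (N₀+1)) - c.Sfun y (i + (N₀+1))‖^2
        ≤ ((1/2:ℝ)^(i + (N₀+1)) * (11 * c.C1))^2 :=
      pow_le_pow_left₀ (norm_nonneg _) h2 2
    rw [half_pow_sq] at h3
    calc ‖c.Sfun x (i + (N₀+1)) - c.Sfun y (i + (N₀+1))‖^2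
        ≤ (11*c.C1)^2 * (1/4:ℝ)^(i + (N₀+1)) := h3
    _ = (11*c.C1)^2 * ((1/4:ℝ)^(N₀+1) * (1/4:ℝ)^i) := by
        rw [pow_add]; ring
  -- combine
  have hsum := lp_summable_sq (c.S x - c.S y)
  have hsplit := Summable.sum_add_tsum_nat_add (N₀+1) hsum
  have hgeo2 : Summable (fun i : ℕ => (11*c.C1)^2 * ((1/4:ℝ)^(N₀+1) * (1/4:ℝ)^i)) := by
    apply Summable.mul_left
    exact (summable_geometric_of_lt_one (by norm_num) (by norm_num)).mul_left _
  have htailsum : ∑' i, ‖((c.S x - c.S y : lp (fun _ : ℕ => H) 2) : ∀ _ : ℕ, H) (i + (N₀+1))‖^2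
      ≤ (11*c.C1)^2 * (1/4:ℝ)^N₀ := by
    calc ∑' i, ‖((c.S x - c.S y : lp (fun _ : ℕ => H) 2) : ∀ _ : ℕ, H) (i + (N₀+1))‖^2
        ≤ ∑' i, (11*c.C1)^2 * ((1/4:ℝ)^(N₀+1) * (1/4:ℝ)^i) := by
          apply Summable.tsum_le_tsum htail ((summable_nat_add_iff (N₀+1)).mpr hsum) hgeo2
    _ = (11*c.C1)^2 * ((1/4:ℝ)^(N₀+1) * ∑' i : ℕ, (1/4:ℝ)^i) := by
        rw [← tsum_mul_left, ← tsum_mul_left]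
    _ = (11*c.C1)^2 * ((1/4:ℝ)^(N₀+1) * (1-1/4:ℝ)⁻¹) := by
        rw [tsum_geometric_of_lt_one (by norm_num) (by norm_num)]
    _ ≤ (11*c.C1)^2 * (1/4:ℝ)^N₀ := by
        apply mul_le_mul_of_nonneg_left _ (by positivity)
        nlinarith [pow_succ (1/4:ℝ) N₀, pow_nonneg (by norm_num : (0:ℝ) ≤ 1/4) N₀]
  have hheadsum : ∑ n ∈ Finset.range (N₀+1),
      ‖((c.S x - c.S y : lp (fun _ : ℕ => H) 2) : ∀ _ : ℕ, H) n‖^2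
        ≤ K * N.d x y := by
    calc ∑ n ∈ Finset.range (N₀+1), ‖((c.S x - c.S y : lp (fun _ : ℕ => H) 2) : ∀ _ : ℕ, H) n‖^2
        ≤ ∑ _n ∈ Finset.range (N₀+1), 32 * c.M * 2^N₀ * N.d x y :=
          Finset.sum_le_sum hhead
    _ = (N₀+1 : ℝ) * (32 * c.M * 2^N₀ * N.d x y) := by
        rw [Finset.sum_const, Finset.card_range]
        push_cast
        ring
    _ = K * N.d x y := by rw [hK]; ring
  have htotal : ‖c.S x - c.S y‖^2 < ε^2 := by
    rw [lp_norm_sq, ← hsplit]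
    have hhalf1 : K * N.d x y < ε^2/2 := by
      have h1 : K * N.d x y < K * ((ε^2/2) / (K + 1)) :=
        mul_lt_mul_of_pos_left hdK hKpos
      have h2 : K * ((ε^2/2) / (K + 1)) < ε^2/2 := by
        rw [mul_div_assoc']
        rw [div_lt_iff₀ (by linarith : (0:ℝ) < K + 1)]
        nlinarith
      linarith
    have hhalf2 : (11*c.C1)^2 * (1/4:ℝ)^N₀ < ε^2/2 := by
      have h1 : ((1/4:ℝ))^N₀ < (ε^2/2) / ((11*c.C1)^2 + 1) := hN₀
      have h2 : (11*c.C1)^2 * ((1/4:ℝ))^N₀ < (11*c.C1)^2 * ((ε^2/2) / ((11*c.C1)^2 + 1)) := by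
        apply mul_lt_mul_of_pos_left h1 (by positivity)
      have h3 : (11*c.C1)^2 * ((ε^2/2) / ((11*c.C1)^2 + 1)) < ε^2/2 := by
        rw [mul_div_assoc']
        rw [div_lt_iff₀ (by positivity : (0:ℝ) < (11*c.C1)^2 + 1)]
        nlinarith [sq_nonneg (11*c.C1)]
      linarith
    linarith
  exact lt_of_pow_lt_pow_left₀ 2 (le_of_lt hε) htotal

lemma S_inverse : ∀ ε > (0:ℝ), ∃ δ > (0:ℝ), ∀ x y : X,
    ‖c.S x - c.S y‖ < δ → N.d x y < ε := by
  intro ε hε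
  have hC := c.C1_pos
  obtain ⟨s₀, hs₀⟩ := Filter.eventually_atTop.mp
    (c.tendsto1.eventually_ge_atTop (4 * c.C1 + 1))
  obtain ⟨n₁, hn₁⟩ := exists_nat_gt (s₀ / ε)
  have hlt2 : (n₁ : ℝ) < (2:ℝ)^n₁ := by
    have := Nat.lt_two_pow_self (n := n₁)
    exact_mod_cast this
  have hs₀lt : s₀ < ε * 2^n₁ := by
    have h1 : s₀ / ε < (2:ℝ)^n₁ := lt_trans hn₁ hlt2
    rw [div_lt_iff₀ hε] at h1
    linarith [h1]
  refine ⟨wtf p n₁, wtf_pos p n₁, ?_⟩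
  intro x y h
  by_contra hd
  push_neg at hd
  have h2 : s₀ ≤ 2^n₁ * N.d x y := by
    have h3 : ε * 2^n₁ ≤ 2^n₁ * N.d x y := by
      rw [mul_comm]
      exact mul_le_mul_of_nonneg_left hd (by positivity)
    linarith
  have h4 := c.S_sep (x := x) (y := y) (n := n₁) (hs₀ _ h2)
  linarith

lemma S_injective : Function.Injective c.S := by
  intro x y hS
  by_contra hxy
  have hd : 0 < N.d x y := by
    rcases lt_or_eq_of_le (N.d_nonneg x y) with h | h
    · exact h
    · exact absurd ((N.d_eq_zero_iff x y).mp h.symm) hxy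
  obtain ⟨δ, hδ, hinv⟩ := c.S_inverse (N.d x y) hd
  have : ‖c.S x - c.S y‖ < δ := by
    rw [hS, sub_self, norm_zero]; exact hδ
  exact absurd (hinv x y this) (lt_irrefl _)

end Assembly

end CD

end CISU


/-- If a `p`-normed space (with the metric `d(x,y) = ‖x - y‖ ^ p`) coarsely embeds into a
real Hilbert space, then it strongly uniformly embeds into a real Hilbert space. -/
theorem coarse_implies_strong_uniform
    (p : ℝ) (hp0 : 0 < p) (hp1 : p ≤ 1)
    (X : Type u) [AddCommGroup X] [Module ℝ X] (nrm : X → ℝ)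
    (hnrm_nonneg : ∀ x, 0 ≤ nrm x)
    (hnrm_zero : ∀ x, nrm x = 0 ↔ x = 0)
    (hnrm_smul : ∀ (a : ℝ) (x : X), nrm (a • x) = |a| * nrm x)
    (hnrm_tri : ∀ x y, nrm (x + y) ^ p ≤ nrm x ^ p + nrm y ^ p)
    (hcoarse : ∃ (H : Type u) (_ : NormedAddCommGroup H) (_ : InnerProductSpace ℝ H)
      (_ : CompleteSpace H) (T : X → H),
      IsCoarseEmb (fun x y => nrm (x - y) ^ p) (fun u v => dist u v) T) :
    ∃ (H : Type u) (_ : NormedAddCommGroup H) (_ : InnerProductSpace ℝ H)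
      (_ : CompleteSpace H) (T : X → H),
      IsCoarseEmb (fun x y => nrm (x - y) ^ p) (fun u v => dist u v) T ∧
      IsUnifEmb (fun x y => nrm (x - y) ^ p) (fun u v => dist u v) T := by

  classical
  obtain ⟨H, iNG, iIP, iC, T, hT⟩ := hcoarse
  letI := iNG
  letI := iIP
  letI := iC
  obtain ⟨ρ₁, ρ₂, m1, m2, n1, n2, td, hb⟩ := hT
  set N : CISU.ND p X := ⟨nrm, hp0, hp1, hnrm_nonneg, hnrm_zero, hnrm_smul, hnrm_tri⟩ with hN
  set c : CISU.CD N H :=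
    ⟨T, ρ₁, ρ₂, m1, m2, n2, td,
      fun x y => by
        have h := (hb x y).1
        dsimp only at h
        rwa [dist_eq_norm] at h,
      fun x y => by
        have h := (hb x y).2
        dsimp only at h
        rwa [dist_eq_norm] at h⟩ with hc
  have hC := c.C1_pos
  have hinvp : (0:ℝ) ≤ 1/p := one_div_nonneg.mpr (le_of_lt hp0)
  refine ⟨lp (fun _ : ℕ => H) 2, inferInstance, inferInstance, inferInstance, c.S, ?_, ?_, ?_⟩
  · -- coarse embedding
    refine ⟨fun t => max 0 ((ρ₁ t - 4 * c.C1)/2),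
      fun t => 2 * (9 * c.C1 + 2 * c.C1 * t^(1/p)), ?_, ?_, ?_, ?_, ?_, ?_⟩
    · -- monotone ρ̂₁
      intro a ha b hb' hab
      have := m1 ha hb' hab
      exact max_le_max le_rfl (by linarith)
    · -- monotone ρ̂₂
      intro a ha b hb' hab
      have h1 : a^(1/p) ≤ b^(1/p) := Real.rpow_le_rpow ha hab hinvp
      have h2 : 2 * c.C1 * a^(1/p) ≤ 2 * c.C1 * b^(1/p) :=
        mul_le_mul_of_nonneg_left h1 (by linarith)
      linarith
    · exact fun t _ => le_max_left 0 _
    · intro t ht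
      have h1 : (0:ℝ) ≤ t^(1/p) := Real.rpow_nonneg ht _
      nlinarith
    · -- tendsto atTop
      apply Filter.tendsto_atTop_mono (fun t => le_max_right 0 ((ρ₁ t - 4 * c.C1)/2))
      have h1 : Filter.Tendsto (fun t => ρ₁ t + -(4 * c.C1)) Filter.atTop Filter.atTop :=
        Filter.tendsto_atTop_add_const_right _ _ td
      have h2 := h1.atTop_div_const (by norm_num : (0:ℝ) < 2)
      simpa [sub_eq_add_neg] using h2
    · intro x y
      constructor
      · dsimp only
        apply max_le dist_nonneg
        have h := c.S_lower x y
        rw [dist_eq_norm]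
        exact h
      · dsimp only
        rw [dist_eq_norm]
        exact c.S_dist_le x y
  · -- injective
    exact c.S_injective
  · constructor
    · -- forward uniform continuity
      intro ε hε
      obtain ⟨δ, hδ, hf⟩ := c.S_forward ε hε
      exact ⟨δ, hδ, fun x y h => by dsimp only; rw [dist_eq_norm]; exact hf x y h⟩
    · -- inverse uniform continuity
      intro ε hε
      obtain ⟨δ, hδ, hf⟩ := c.S_inverse ε hε
      refine ⟨δ, hδ, fun x y h => ?_⟩
      dsimp only at h
      rw [dist_eq_norm] at h
      exact hf x y h
end

section
/- Let 0 < p ≤ 1 and let X be a p-normed space, regarded as a metric space with d(x,y) = ‖x−y‖^p. If X uniformly embeds into a real Hilbert space, then X coarsely embeds into a real Hilbert space. -/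
open Filter Set

universe u

/-- If a `p`-normed space (with the metric `d(x,y) = ‖x - y‖ ^ p`) uniformly embeds into a
real Hilbert space, then it coarsely embeds into a real Hilbert space. -/
theorem uniform_implies_coarse
    (p : ℝ) (hp0 : 0 < p) (hp1 : p ≤ 1)
    (X : Type u) [AddCommGroup X] [Module ℝ X] (nrm : X → ℝ)
    (hnrm_nonneg : ∀ x, 0 ≤ nrm x)
    (hnrm_zero : ∀ x, nrm x = 0 ↔ x = 0)
    (hnrm_smul : ∀ (a : ℝ) (x : X), nrm (a • x) = |a| * nrm x)
    (hnrm_tri : ∀ x y, nrm (x + y) ^ p ≤ nrm x ^ p + nrm y ^ p)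
    (hunif : ∃ (H : Type u) (_ : NormedAddCommGroup H) (_ : InnerProductSpace ℝ H)
      (_ : CompleteSpace H) (T : X → H),
      IsUnifEmb (fun x y => nrm (x - y) ^ p) (fun u v => dist u v) T) :
    ∃ (H : Type u) (_ : NormedAddCommGroup H) (_ : InnerProductSpace ℝ H)
      (_ : CompleteSpace H) (T : X → H),
      IsCoarseEmb (fun x y => nrm (x - y) ^ p) (fun u v => dist u v) T := by
  obtain ⟨H, instN, instI, instC, T, hT⟩ := hunif
  unfold IsUnifEmb at hT
  obtain ⟨-, hT1, hT2⟩ := hT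
  have hp0' : p ≠ 0 := ne_of_gt hp0
  -- basic facts about the distance
  have hd_nonneg : ∀ x y : X, 0 ≤ nrm (x - y) ^ p := fun x y =>
    Real.rpow_nonneg (hnrm_nonneg _) _
  have hd_homog : ∀ (t : ℝ), 0 ≤ t → ∀ x y : X,
      nrm (t • x - t • y) ^ p = t ^ p * nrm (x - y) ^ p := by
    intro t ht x y
    rw [← smul_sub, hnrm_smul, abs_of_nonneg ht, Real.mul_rpow ht (hnrm_nonneg _)]
  -- the chain modulus
  obtain ⟨δ0, hδ0pos, hδ0⟩ := hT1 1 one_pos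
  set ω : ℝ → ℝ := fun s => (s / δ0) ^ (1 / p) + 1 with hω
  have hω_nonneg : ∀ s, 0 ≤ s → 0 ≤ ω s := by
    intro s hs
    have : (0:ℝ) ≤ (s / δ0) ^ (1 / p) := Real.rpow_nonneg (div_nonneg hs hδ0pos.le) _
    simp only [hω]; linarith
  have hω_mono : ∀ s s', 0 ≤ s → s ≤ s' → ω s ≤ ω s' := by
    intro s s' hs hss
    have : (s / δ0) ^ (1 / p) ≤ (s' / δ0) ^ (1 / p) :=
      Real.rpow_le_rpow (div_nonneg hs hδ0pos.le)
        (by gcongr) (by positivity)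
    simp only [hω]; linarith
  -- chaining: a global upper modulus
  have chain : ∀ u v : X, dist (T u) (T v) ≤ ω (nrm (u - v) ^ p) := by
    intro u v
    set s : ℝ := nrm (u - v) ^ p with hs
    have hs0 : 0 ≤ s := hd_nonneg u v
    set n : ℕ := ⌊(s / δ0) ^ (1 / p)⌋₊ + 1 with hn
    have hnR : (0:ℝ) < (n:ℝ) := by positivity
    have hsymm : ∀ z : X, nrm (-z) = nrm z := by
      intro z
      have := hnrm_smul (-1) z
      simpa using this
    -- each step of the chain is short
    have hstep : ∀ w : X, nrm w = nrm (u - v) → nrm (((1:ℝ)/(n:ℝ)) • w) ^ p < δ0 := by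
      intro w hw
      have h1 : (s / δ0) ^ (1 / p) < (n : ℝ) := by
        have := Nat.lt_floor_add_one ((s / δ0) ^ (1 / p))
        rw [hn]; push_cast; linarith
      have h2 : s / δ0 < (n:ℝ) ^ p := by
        have h3 : ((s / δ0) ^ (1/p)) ^ p < ((n:ℝ)) ^ p :=
          Real.rpow_lt_rpow (Real.rpow_nonneg (div_nonneg hs0 hδ0pos.le) _) h1 hp0
        rwa [← Real.rpow_mul (div_nonneg hs0 hδ0pos.le), one_div,
          inv_mul_cancel₀ hp0', Real.rpow_one] at h3
      have hnp : (0:ℝ) < (n:ℝ) ^ p := Real.rpow_pos_of_pos hnR p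
      have hsm : nrm (((1:ℝ)/(n:ℝ)) • w) = (1/(n:ℝ)) * nrm (u - v) := by
        rw [hnrm_smul, abs_of_nonneg (by positivity), hw]
      rw [hsm, Real.mul_rpow (by positivity) (hnrm_nonneg _), ← hs, one_div,
        Real.inv_rpow hnR.le]
      have : s < (n:ℝ) ^ p * δ0 := (div_lt_iff₀ hδ0pos).mp h2
      rw [inv_mul_lt_iff₀ hnp]
      linarith
    -- the chain itself
    have key : ∀ i : ℕ, i ≤ n → dist (T u) (T (u + ((i:ℝ)/(n:ℝ)) • (v - u))) ≤ (i:ℝ) := by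
      intro i
      induction i with
      | zero => intro _; simp
      | succ i ih =>
        intro hi
        have hi' : i ≤ n := Nat.le_of_succ_le hi
        have hstep' : dist (T (u + ((i:ℝ)/(n:ℝ)) • (v - u)))
            (T (u + (((i:ℕ)+1:ℝ)/(n:ℝ)) • (v - u))) < 1 := by
          apply hδ0
          have hdiff : (u + ((i:ℝ)/(n:ℝ)) • (v - u)) - (u + (((i:ℕ)+1:ℝ)/(n:ℝ)) • (v - u))
              = ((1:ℝ)/(n:ℝ)) • (u - v) := by
            have hne : (n:ℝ) ≠ 0 := hnR.ne'
            match_scalars <;> field_simp <;> ring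
          beta_reduce
          rw [hdiff]
          exact hstep (u - v) rfl
        have htri := dist_triangle (T u) (T (u + ((i:ℝ)/(n:ℝ)) • (v - u)))
          (T (u + (((i:ℕ)+1:ℝ)/(n:ℝ)) • (v - u)))
        have := ih hi'
        push_cast
        push_cast at htri this hstep' ⊢
        linarith
    have hv : u + ((n:ℝ)/(n:ℝ)) • (v - u) = v := by
      rw [div_self hnR.ne', one_smul]
      abel
    have hfin := key n le_rfl
    rw [hv] at hfin
    have hfloor : (⌊(s / δ0) ^ (1 / p)⌋₊ : ℝ) ≤ (s / δ0) ^ (1 / p) :=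
      Nat.floor_le (Real.rpow_nonneg (div_nonneg hs0 hδ0pos.le) _)
    calc dist (T u) (T v) ≤ (n:ℝ) := hfin
      _ ≤ (s / δ0) ^ (1 / p) + 1 := by rw [hn]; push_cast; linarith
      _ = ω s := rfl
  -- the lower modulus constant
  obtain ⟨θ, hθpos, hθ⟩ := hT2 1 one_pos
  have hlow : ∀ u v : X, (1:ℝ) ≤ nrm (u - v) ^ p → θ ≤ dist (T u) (T v) := by
    intro u v h
    by_contra hlt
    exact absurd (hθ u v (lt_of_not_ge hlt)) (not_lt.2 h)
  -- a sequence of scales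
  have hδseq : ∀ k : ℕ, ∃ δ > (0:ℝ), ∀ x y : X,
      nrm (x - y) ^ p < δ → dist (T x) (T y) < (1/2:ℝ)^k :=
    fun k => hT1 ((1/2:ℝ)^k) (by positivity)
  choose δs hδspos hδs using hδseq
  set c : ℕ → ℝ := fun k => min (δs k) (min δ0 1) * (1/2:ℝ)^k with hc
  have hcpos : ∀ k, 0 < c k := by
    intro k
    exact mul_pos (lt_min (hδspos k) (lt_min hδ0pos one_pos)) (by positivity)
  have hc_le : ∀ k, c k ≤ (1/2:ℝ)^k := by
    intro k
    have h1 : min (δs k) (min δ0 1) ≤ 1 := le_trans (min_le_right _ _) (min_le_right _ _)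
    calc c k ≤ 1 * (1/2:ℝ)^k := by
          apply mul_le_mul_of_nonneg_right h1 (by positivity)
      _ = (1/2:ℝ)^k := one_mul _
  have hc_le_one : ∀ k, c k ≤ 1 := by
    intro k
    refine (hc_le k).trans ?_
    apply pow_le_one₀ <;> norm_num
  set t : ℕ → ℝ := fun k => (c k) ^ (1/p : ℝ) with ht
  have ht_nonneg : ∀ k, 0 ≤ t k := fun k => Real.rpow_nonneg (hcpos k).le _
  have ht_pow : ∀ k, (t k) ^ p = c k := by
    intro k
    rw [ht]
    rw [← Real.rpow_mul (hcpos k).le, one_div, inv_mul_cancel₀ hp0', Real.rpow_one]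
  -- the rescaled distance
  have hresc : ∀ (k : ℕ) (x y : X), nrm (t k • x - t k • y) ^ p = c k * nrm (x - y) ^ p := by
    intro k x y
    rw [hd_homog (t k) (ht_nonneg k), ht_pow]
  -- per-coordinate upper bound for large k
  have hub : ∀ (x y : X) (k : ℕ), nrm (x - y) ^ p < (2:ℝ)^k →
      dist (T (t k • x)) (T (t k • y)) ≤ (1/2:ℝ)^k := by
    intro x y k hk
    apply le_of_lt
    apply hδs k
    rw [hresc]
    set s : ℝ := nrm (x - y) ^ p
    have hs0 : 0 ≤ s := hd_nonneg x y
    have h1 : (1/2:ℝ)^k * s < 1 := by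
      have h2 : (1/2:ℝ)^k * s < (1/2:ℝ)^k * 2^k :=
        mul_lt_mul_of_pos_left hk (by positivity)
      have h3 : (1/2:ℝ)^k * 2^k = 1 := by
        rw [← mul_pow]; norm_num
      linarith
    have hmpos : (0:ℝ) < min (δs k) (min δ0 1) := lt_min (hδspos k) (lt_min hδ0pos one_pos)
    calc c k * s = min (δs k) (min δ0 1) * ((1/2:ℝ)^k * s) := by rw [hc]; ring
      _ < min (δs k) (min δ0 1) * 1 := mul_lt_mul_of_pos_left h1 hmpos
      _ ≤ δs k := by rw [mul_one]; exact min_le_left _ _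
  -- per-coordinate uniform upper bound
  have hub2 : ∀ (x y : X) (k : ℕ),
      dist (T (t k • x)) (T (t k • y)) ≤ ω (nrm (x - y) ^ p) := by
    intro x y k
    refine (chain _ _).trans ?_
    rw [hresc]
    have hs0 : 0 ≤ nrm (x - y) ^ p := hd_nonneg x y
    exact hω_mono _ _ (mul_nonneg (hcpos k).le hs0) (mul_le_of_le_one_left hs0 (hc_le_one k))
  -- per-coordinate lower bound
  have hlb : ∀ (x y : X) (k : ℕ), (c k)⁻¹ ≤ nrm (x - y) ^ p →
      θ ≤ dist (T (t k • x)) (T (t k • y)) := by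
    intro x y k hk
    apply hlow
    rw [hresc]
    calc (1:ℝ) = c k * (c k)⁻¹ := (mul_inv_cancel₀ (hcpos k).ne').symm
      _ ≤ c k * nrm (x - y) ^ p := mul_le_mul_of_nonneg_left hk (hcpos k).le
  -- s < 2^k for k ≥ ⌊s⌋₊ + 1
  have h2k : ∀ (s : ℝ) (k : ℕ), ⌊s⌋₊ + 1 ≤ k → s < (2:ℝ)^k := by
    intro s k hk
    have h1 : s < (⌊s⌋₊:ℝ) + 1 := Nat.lt_floor_add_one s
    have h2 : ((⌊s⌋₊:ℕ):ℝ) + 1 ≤ (k:ℝ) := by exact_mod_cast hk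
    have h3 : (k:ℝ) < (2:ℝ)^k := by exact_mod_cast (Nat.lt_two_pow_self (n := k))
    linarith
  -- the key finite-sum upper bound
  have keyUB : ∀ (x y : X) (F : Finset ℕ),
      ∑ k ∈ F, dist (T (t k • x)) (T (t k • y)) ^ (2:ℕ)
        ≤ ((⌊nrm (x - y) ^ p⌋₊ : ℝ) + 1) * (ω (nrm (x - y) ^ p))^2 + 2 := by
    intro x y F
    set s : ℝ := nrm (x - y) ^ p with hs
    have hs0 : 0 ≤ s := hd_nonneg x y
    set N : ℕ := ⌊s⌋₊ + 1 with hN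
    rw [← Finset.sum_filter_add_sum_filter_not F (fun k => k < N)
      (fun k => dist (T (t k • x)) (T (t k • y)) ^ (2:ℕ))]
    have h1 : ∑ k ∈ F.filter (fun k => k < N), dist (T (t k • x)) (T (t k • y)) ^ (2:ℕ)
        ≤ (N:ℝ) * (ω s)^2 := by
      have hterm : ∀ k ∈ F.filter (fun k => k < N),
          dist (T (t k • x)) (T (t k • y)) ^ (2:ℕ) ≤ (ω s)^2 := by
        intro k _
        exact pow_le_pow_left₀ dist_nonneg (hub2 x y k) 2
      calc ∑ k ∈ F.filter (fun k => k < N), dist (T (t k • x)) (T (t k • y)) ^ (2:ℕ)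
          ≤ ∑ _k ∈ F.filter (fun k => k < N), (ω s)^2 := Finset.sum_le_sum hterm
        _ = ((F.filter (fun k => k < N)).card : ℝ) * (ω s)^2 := by
            rw [Finset.sum_const, nsmul_eq_mul]
        _ ≤ (N:ℝ) * (ω s)^2 := by
            apply mul_le_mul_of_nonneg_right _ (sq_nonneg _)
            have hsub : F.filter (fun k => k < N) ⊆ Finset.range N := by
              intro k hk
              rw [Finset.mem_range]
              exact (Finset.mem_filter.mp hk).2
            have := Finset.card_le_card hsub
            rw [Finset.card_range] at this
            exact_mod_cast this
    have h2 : ∑ k ∈ F.filter (fun k => ¬ k < N), dist (T (t k • x)) (T (t k • y)) ^ (2:ℕ)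
        ≤ 2 := by
      have hterm : ∀ k ∈ F.filter (fun k => ¬ k < N),
          dist (T (t k • x)) (T (t k • y)) ^ (2:ℕ) ≤ (1/4:ℝ)^k := by
        intro k hk
        have hkN : N ≤ k := le_of_not_gt (Finset.mem_filter.mp hk).2
        have hsk : s < (2:ℝ)^k := h2k s k hkN
        have hD : dist (T (t k • x)) (T (t k • y)) ≤ (1/2:ℝ)^k := hub x y k hsk
        calc dist (T (t k • x)) (T (t k • y)) ^ (2:ℕ) ≤ ((1/2:ℝ)^k)^(2:ℕ) :=
            pow_le_pow_left₀ dist_nonneg hD 2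
          _ = (1/4:ℝ)^k := by rw [← pow_mul, mul_comm, pow_mul]; norm_num
      calc ∑ k ∈ F.filter (fun k => ¬ k < N), dist (T (t k • x)) (T (t k • y)) ^ (2:ℕ)
          ≤ ∑ k ∈ F.filter (fun k => ¬ k < N), (1/4:ℝ)^k := Finset.sum_le_sum hterm
        _ ≤ ∑' k : ℕ, (1/4:ℝ)^k := by
            apply Summable.sum_le_tsum _ (fun k _ => by positivity)
            exact summable_geometric_of_lt_one (by norm_num) (by norm_num)
        _ = (1 - 1/4:ℝ)⁻¹ := tsum_geometric_of_lt_one (by norm_num) (by norm_num)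
        _ ≤ 2 := by norm_num
    have hcast : ((N:ℕ):ℝ) = (⌊s⌋₊:ℝ) + 1 := by rw [hN]; push_cast; ring
    rw [← hcast]
    linarith
  -- the exponent normalization
  have hexp : ∀ a : ℝ, a ^ (2:ENNReal).toReal = a ^ (2:ℕ) := by
    intro a
    rw [show (2:ENNReal).toReal = ((2:ℕ):ℝ) by norm_num, Real.rpow_natCast]
  -- the map into the ℓ² sum
  have hmem : ∀ x : X, Memℓp (fun k : ℕ => T (t k • x) - T 0) 2 := by
    intro x
    apply memℓp_gen' (C := ((⌊nrm (x - 0) ^ p⌋₊ : ℝ) + 1) * (ω (nrm (x - 0) ^ p))^2 + 2)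
    intro F
    refine le_trans (le_of_eq ?_) (keyUB x 0 F)
    apply Finset.sum_congr rfl
    intro k _
    rw [hexp, smul_zero, dist_eq_norm]
  set S : X → lp (fun _ : ℕ => H) 2 := fun x => ⟨fun k => T (t k • x) - T 0, hmem x⟩ with hS
  have hSsub : ∀ (x y : X) (k : ℕ),
      ‖(S x - S y : lp (fun _ : ℕ => H) 2) k‖ = dist (T (t k • x)) (T (t k • y)) := by
    intro x y k
    rw [lp.coeFn_sub, Pi.sub_apply]
    have h1 : (S x : ∀ _ : ℕ, H) k = T (t k • x) - T 0 := rfl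
    have h2 : (S y : ∀ _ : ℕ, H) k = T (t k • y) - T 0 := rfl
    rw [h1, h2, sub_sub_sub_cancel_right, dist_eq_norm]
  -- the two moduli
  set ρ₂ : ℝ → ℝ := fun s => Real.sqrt (((⌊s⌋₊:ℝ) + 1) * (ω s)^2 + 2) with hρ₂
  set ρ₁ : ℝ → ℝ := fun s =>
    θ * Real.sqrt (((Finset.range (⌊s⌋₊ + 1)).filter (fun k => (c k)⁻¹ ≤ s)).card) with hρ₁
  -- upper estimate
  have hupper : ∀ x y : X, dist (S x) (S y) ≤ ρ₂ (nrm (x - y) ^ p) := by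
    intro x y
    rw [dist_eq_norm]
    set s : ℝ := nrm (x - y) ^ p with hs
    have hs0 : 0 ≤ s := hd_nonneg x y
    have hB : (0:ℝ) ≤ ((⌊s⌋₊:ℝ) + 1) * (ω s)^2 + 2 := by positivity
    apply lp.norm_le_of_forall_sum_le (by norm_num : (0:ℝ) < (2:ENNReal).toReal)
      (Real.sqrt_nonneg _)
    intro F
    calc ∑ k ∈ F, ‖(S x - S y : lp (fun _ : ℕ => H) 2) k‖ ^ (2:ENNReal).toReal
        = ∑ k ∈ F, dist (T (t k • x)) (T (t k • y)) ^ (2:ℕ) := by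
          apply Finset.sum_congr rfl
          intro k _
          rw [hexp, hSsub]
      _ ≤ ((⌊s⌋₊:ℝ) + 1) * (ω s)^2 + 2 := keyUB x y F
      _ = Real.sqrt (((⌊s⌋₊:ℝ) + 1) * (ω s)^2 + 2) ^ (2:ℕ) := (Real.sq_sqrt hB).symm
      _ = ρ₂ s ^ (2:ENNReal).toReal := by rw [hexp]
  -- lower estimate
  have hlower : ∀ x y : X, ρ₁ (nrm (x - y) ^ p) ≤ dist (S x) (S y) := by
    intro x y
    rw [dist_eq_norm]
    set s : ℝ := nrm (x - y) ^ p with hs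
    set F : Finset ℕ := (Finset.range (⌊s⌋₊ + 1)).filter (fun k => (c k)⁻¹ ≤ s) with hF
    have h1 : θ^2 * (F.card:ℝ) ≤ ∑ k ∈ F, dist (T (t k • x)) (T (t k • y)) ^ (2:ℕ) := by
      calc θ^2 * (F.card:ℝ) = ∑ _k ∈ F, θ^2 := by rw [Finset.sum_const, nsmul_eq_mul]; ring
        _ ≤ ∑ k ∈ F, dist (T (t k • x)) (T (t k • y)) ^ (2:ℕ) := by
            apply Finset.sum_le_sum
            intro k hk
            have hks : (c k)⁻¹ ≤ s := (Finset.mem_filter.mp hk).2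
            exact pow_le_pow_left₀ hθpos.le (hlb x y k hks) 2
    have h2 : ∑ k ∈ F, dist (T (t k • x)) (T (t k • y)) ^ (2:ℕ)
        ≤ ‖(S x - S y : lp (fun _ : ℕ => H) 2)‖ ^ (2:ℕ) := by
      calc ∑ k ∈ F, dist (T (t k • x)) (T (t k • y)) ^ (2:ℕ)
          = ∑ k ∈ F, ‖(S x - S y : lp (fun _ : ℕ => H) 2) k‖ ^ (2:ENNReal).toReal := by
            apply Finset.sum_congr rfl
            intro k _
            rw [hexp, hSsub]
        _ ≤ ‖(S x - S y : lp (fun _ : ℕ => H) 2)‖ ^ (2:ENNReal).toReal :=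
            lp.sum_rpow_le_norm_rpow (by norm_num) (S x - S y) F
        _ = ‖(S x - S y : lp (fun _ : ℕ => H) 2)‖ ^ (2:ℕ) := hexp _
    have ha : (0:ℝ) ≤ θ * Real.sqrt (F.card : ℝ) := mul_nonneg hθpos.le (Real.sqrt_nonneg _)
    have hgoal : (θ * Real.sqrt (F.card : ℝ)) ^ (2:ℕ)
        ≤ ‖(S x - S y : lp (fun _ : ℕ => H) 2)‖ ^ (2:ℕ) := by
      rw [mul_pow, Real.sq_sqrt (Nat.cast_nonneg _)]
      linarith
    exact (pow_le_pow_iff_left₀ ha (norm_nonneg _) (by norm_num)).mp hgoal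
  -- nonnegativity of the moduli
  have hρ₁nonneg : ∀ t', (0:ℝ) ≤ t' → 0 ≤ ρ₁ t' := fun t' _ =>
    mul_nonneg hθpos.le (Real.sqrt_nonneg _)
  have hρ₂nonneg : ∀ t', (0:ℝ) ≤ t' → 0 ≤ ρ₂ t' := fun t' _ => Real.sqrt_nonneg _
  -- monotonicity of the moduli
  have hρ₂mono : MonotoneOn ρ₂ (Set.Ici (0:ℝ)) := by
    intro a ha b hb hab
    simp only [Set.mem_Ici] at ha hb
    apply Real.sqrt_le_sqrt
    have h1 : ((⌊a⌋₊:ℝ) + 1) ≤ ((⌊b⌋₊:ℝ) + 1) := by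
      have := Nat.floor_le_floor hab
      have : ((⌊a⌋₊:ℕ):ℝ) ≤ ((⌊b⌋₊:ℕ):ℝ) := by exact_mod_cast this
      linarith
    have h2 : (ω a)^2 ≤ (ω b)^2 := pow_le_pow_left₀ (hω_nonneg a ha) (hω_mono a b ha hab) 2
    have h3 : (0:ℝ) ≤ (ω a)^2 := sq_nonneg _
    nlinarith
  have hρ₁mono : MonotoneOn ρ₁ (Set.Ici (0:ℝ)) := by
    intro a ha b hb hab
    simp only [Set.mem_Ici] at ha hb
    have hsub : (Finset.range (⌊a⌋₊ + 1)).filter (fun k => (c k)⁻¹ ≤ a)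
        ⊆ (Finset.range (⌊b⌋₊ + 1)).filter (fun k => (c k)⁻¹ ≤ b) := by
      intro k hk
      rw [Finset.mem_filter, Finset.mem_range] at hk ⊢
      have hfl : ⌊a⌋₊ ≤ ⌊b⌋₊ := Nat.floor_le_floor hab
      exact ⟨lt_of_lt_of_le hk.1 (by omega), le_trans hk.2 hab⟩
    have hcard := Finset.card_le_card hsub
    apply mul_le_mul_of_nonneg_left _ hθpos.le
    apply Real.sqrt_le_sqrt
    exact_mod_cast hcard
  -- the lower modulus tends to infinity
  have htend : Tendsto ρ₁ atTop atTop := by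
    rw [tendsto_atTop_atTop]
    intro C
    set K : ℕ := ⌈(max C 0 / θ)^2⌉₊ with hK
    refine ⟨(K:ℝ) + ∑ k ∈ Finset.range K, (c k)⁻¹, ?_⟩
    intro s hsbig
    have hsum_nonneg : (0:ℝ) ≤ ∑ k ∈ Finset.range K, (c k)⁻¹ :=
      Finset.sum_nonneg (fun k _ => (inv_pos.mpr (hcpos k)).le)
    have hsK : (K:ℝ) ≤ s := by linarith [hsbig]
    have hssum : ∑ k ∈ Finset.range K, (c k)⁻¹ ≤ s := by
      have : (0:ℝ) ≤ (K:ℝ) := Nat.cast_nonneg K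
      linarith [hsbig]
    have hsub : Finset.range K ⊆ (Finset.range (⌊s⌋₊ + 1)).filter (fun k => (c k)⁻¹ ≤ s) := by
      intro k hk
      have hkK : k < K := Finset.mem_range.mp hk
      rw [Finset.mem_filter, Finset.mem_range]
      constructor
      · have hk' : (k:ℝ) ≤ s := by
          have h1 : ((k:ℕ):ℝ) < (K:ℝ) := by exact_mod_cast hkK
          linarith
        have : k ≤ ⌊s⌋₊ := Nat.le_floor hk'
        omega
      · calc (c k)⁻¹ ≤ ∑ j ∈ Finset.range K, (c j)⁻¹ :=
            Finset.single_le_sum (fun j _ => (inv_pos.mpr (hcpos j)).le) hk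
          _ ≤ s := hssum
    have hcard : (K:ℝ) ≤ (((Finset.range (⌊s⌋₊ + 1)).filter (fun k => (c k)⁻¹ ≤ s)).card : ℝ) := by
      have := Finset.card_le_card hsub
      rw [Finset.card_range] at this
      exact_mod_cast this
    have h1 : max C 0 / θ ≤ Real.sqrt (K:ℝ) := by
      rw [Real.le_sqrt (div_nonneg (le_max_right C 0) hθpos.le) (Nat.cast_nonneg K)]
      exact Nat.le_ceil _
    calc C ≤ max C 0 := le_max_left _ _
      _ = θ * (max C 0 / θ) := by field_simp
      _ ≤ θ * Real.sqrt (K:ℝ) := mul_le_mul_of_nonneg_left h1 hθpos.le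
      _ ≤ ρ₁ s := by
          apply mul_le_mul_of_nonneg_left _ hθpos.le
          exact Real.sqrt_le_sqrt hcard
  -- assemble
  refine ⟨lp (fun _ : ℕ => H) 2, inferInstance, inferInstance, inferInstance, S,
    ρ₁, ρ₂, hρ₁mono, hρ₂mono, hρ₁nonneg, hρ₂nonneg, htend, fun x y => ⟨hlower x y, hupper x y⟩⟩
end

section
/- Let X be a set and let N : X × X → ℂ be a kernel, i.e. N(y,x) = conj(N(x,y)) for all x, y ∈ X. Then N is negative definite if and only if for every t > 0 the kernel (x,y) ↦ exp(−t·N(x,y)) is positive definite. -/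
open scoped ComplexOrder
open Finset Matrix

/-- A kernel on `X`: a complex-valued function satisfying `K (y, x) = conj (K (x, y))`. -/
def IsHermKernel {X : Type*} (K : X → X → ℂ) : Prop :=
  ∀ x y, K y x = starRingEnd ℂ (K x y)

/-- A positive definite kernel. -/
def IsPosDefKernelC {X : Type*} (K : X → X → ℂ) : Prop :=
  IsHermKernel K ∧
  ∀ (n : ℕ) (x : Fin n → X) (c : Fin n → ℂ),
    0 ≤ ∑ i, ∑ j, K (x i) (x j) * c i * starRingEnd ℂ (c j)

/-- A negative definite kernel. -/
def IsNegDefKernelC {X : Type*} (K : X → X → ℂ) : Prop :=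
  IsHermKernel K ∧
  ∀ (n : ℕ) (x : Fin n → X) (c : Fin n → ℂ), (∑ i, c i) = 0 →
    ∑ i, ∑ j, K (x i) (x j) * c i * starRingEnd ℂ (c j) ≤ 0

namespace Schoenberg

variable {X : Type*}

local notation "conj'" => starRingEnd ℂ

/-- positivity of the quadratic form (no Hermitian assumption). -/
def QFnn (K : X → X → ℂ) : Prop :=
  ∀ (n : ℕ) (x : Fin n → X) (c : Fin n → ℂ),
    0 ≤ ∑ i, ∑ j, K (x i) (x j) * c i * conj' (c j)

lemma qfnn_one : QFnn (fun (_ _ : X) => (1 : ℂ)) := by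
  intro n x c
  have h : ∑ i, ∑ j, (1 : ℂ) * c i * conj' (c j)
      = (∑ i, c i) * conj' (∑ j, c j) := by
    rw [map_sum, Finset.sum_mul_sum]
    simp [one_mul]
  rw [h, Complex.mul_conj]
  exact_mod_cast Complex.normSq_nonneg _

lemma herm_conj {K : X → X → ℂ} (hH : ∀ x y, K y x = conj' (K x y)) (x y : X) :
    conj' (K y x) = K x y := by
  rw [hH x y, Complex.conj_conj]


lemma matrix_psd {K : X → X → ℂ} (hH : ∀ x y, K y x = conj' (K x y)) (hQ : QFnn K)
    {n : ℕ} (x : Fin n → X) :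
    Matrix.PosSemidef (Matrix.of fun i j => K (x i) (x j)) := by
  refine Matrix.PosSemidef.of_dotProduct_mulVec_nonneg ?_ ?_
  · ext i j
    simp only [Matrix.conjTranspose_apply, Matrix.of_apply]
    exact herm_conj hH (x i) (x j)
  · intro v
    have h := hQ n x (star v)
    have e : star v ⬝ᵥ ((Matrix.of fun i j => K (x i) (x j)) *ᵥ v)
        = ∑ i, ∑ j, K (x i) (x j) * (star v) i * conj' ((star v) j) := by
      simp only [dotProduct, Matrix.mulVec, Matrix.of_apply, Pi.star_apply,
        Finset.mul_sum]
      refine Finset.sum_congr rfl fun i _ => Finset.sum_congr rfl fun j _ => ?_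
      simp only [RCLike.star_def, Complex.conj_conj]
      ring
    rw [e]
    exact h

open scoped MatrixOrder Matrix.Norms.L2Operator in
lemma qfnn_mul {A B : X → X → ℂ} (hA : QFnn A)
    (hBH : ∀ x y, B y x = conj' (B x y)) (hB : QFnn B) :
    QFnn (fun x y => A x y * B x y) := by
  intro n x c
  obtain ⟨L, hL⟩ := CStarAlgebra.nonneg_iff_eq_star_mul_self.mp (matrix_psd hBH hB x).nonneg
  have hB' : ∀ i j, B (x i) (x j) = ∑ k, conj' (L k i) * L k j := by
    intro i j
    have := congrFun (congrFun (congrArg (fun M => (M : Matrix (Fin n) (Fin n) ℂ)) hL) i) j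
    simpa [Matrix.star_eq_conjTranspose, Matrix.mul_apply, Matrix.conjTranspose_apply] using this
  have step1 : ∑ i, ∑ j, A (x i) (x j) * B (x i) (x j) * c i * conj' (c j)
      = ∑ i, ∑ j, ∑ k, A (x i) (x j) * (c i * conj' (L k i))
          * conj' (c j * conj' (L k j)) := by
    refine Finset.sum_congr rfl fun i _ => Finset.sum_congr rfl fun j _ => ?_
    rw [hB' i j, Finset.mul_sum, Finset.sum_mul, Finset.sum_mul]
    refine Finset.sum_congr rfl fun k _ => ?_
    simp only [_root_.map_mul, Complex.conj_conj]
    ring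
  have step2 : ∑ i, ∑ j, ∑ k, A (x i) (x j) * (c i * conj' (L k i))
          * conj' (c j * conj' (L k j))
      = ∑ k, ∑ i, ∑ j, A (x i) (x j) * (c i * conj' (L k i))
          * conj' (c j * conj' (L k j)) := by
    calc ∑ i, ∑ j, ∑ k, A (x i) (x j) * (c i * conj' (L k i))
            * conj' (c j * conj' (L k j))
        = ∑ i, ∑ k, ∑ j, A (x i) (x j) * (c i * conj' (L k i))
            * conj' (c j * conj' (L k j)) :=
          Finset.sum_congr rfl fun i _ => Finset.sum_comm
      _ = ∑ k, ∑ i, ∑ j, A (x i) (x j) * (c i * conj' (L k i))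
            * conj' (c j * conj' (L k j)) := Finset.sum_comm
  rw [step1, step2]
  exact Finset.sum_nonneg fun k _ => hA n x (fun i => c i * conj' (L k i))


lemma qfnn_pow {A : X → X → ℂ} (hH : ∀ x y, A y x = conj' (A x y)) (hA : QFnn A) (k : ℕ) :
    QFnn (fun x y => A x y ^ k) := by
  induction k with
  | zero => simpa using (qfnn_one (X := X))
  | succ k ih =>
      have := qfnn_mul ih hH hA
      intro n x c
      have h := this n x c
      calc (0:ℂ) ≤ ∑ i, ∑ j, A (x i) (x j) ^ k * A (x i) (x j) * c i * conj' (c j) := h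
        _ = ∑ i, ∑ j, A (x i) (x j) ^ (k + 1) * c i * conj' (c j) := by
            refine Finset.sum_congr rfl fun i _ => Finset.sum_congr rfl fun j _ => ?_
            rw [pow_succ]

lemma nat_inv_nonneg (k : ℕ) : (0:ℂ) ≤ ((k : ℂ))⁻¹ := by
  rw [← Complex.ofReal_natCast, ← Complex.ofReal_inv]
  rw [Complex.zero_le_real]
  positivity

lemma qfnn_exp {A : X → X → ℂ} (hH : ∀ x y, A y x = conj' (A x y)) (hA : QFnn A) :
    QFnn (fun x y => Complex.exp (A x y)) := by
  intro n x c
  set F : ℕ → ℂ := fun m =>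
    ∑ i, ∑ j, (∑ k ∈ Finset.range m, A (x i) (x j) ^ k / (k.factorial : ℂ)) * c i * conj' (c j)
    with hF
  have hFnn : ∀ m, 0 ≤ F m := by
    intro m
    have e : F m = ∑ k ∈ Finset.range m,
        ((k.factorial : ℂ))⁻¹ * ∑ i, ∑ j, A (x i) (x j) ^ k * c i * conj' (c j) := by
      rw [hF]
      calc ∑ i, ∑ j, (∑ k ∈ Finset.range m, A (x i) (x j) ^ k / (k.factorial : ℂ)) * c i * conj' (c j)
          = ∑ i, ∑ j, ∑ k ∈ Finset.range m,
              ((k.factorial : ℂ))⁻¹ * (A (x i) (x j) ^ k * c i * conj' (c j)) := by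
            refine Finset.sum_congr rfl fun i _ => Finset.sum_congr rfl fun j _ => ?_
            rw [Finset.sum_mul, Finset.sum_mul]
            exact Finset.sum_congr rfl fun k _ => by rw [div_eq_mul_inv]; ring
        _ = ∑ i, ∑ k ∈ Finset.range m, ∑ j,
              ((k.factorial : ℂ))⁻¹ * (A (x i) (x j) ^ k * c i * conj' (c j)) :=
            Finset.sum_congr rfl fun i _ => Finset.sum_comm
        _ = ∑ k ∈ Finset.range m, ∑ i, ∑ j,
              ((k.factorial : ℂ))⁻¹ * (A (x i) (x j) ^ k * c i * conj' (c j)) :=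
            Finset.sum_comm
        _ = ∑ k ∈ Finset.range m,
              ((k.factorial : ℂ))⁻¹ * ∑ i, ∑ j, A (x i) (x j) ^ k * c i * conj' (c j) := by
            refine Finset.sum_congr rfl fun k _ => ?_
            rw [Finset.mul_sum]
            exact Finset.sum_congr rfl fun i _ => by rw [Finset.mul_sum]
    rw [e]
    exact Finset.sum_nonneg fun k _ =>
      mul_nonneg (nat_inv_nonneg _) (qfnn_pow hH hA k n x c)
  have hTend : Filter.Tendsto F Filter.atTop
      (nhds (∑ i, ∑ j, Complex.exp (A (x i) (x j)) * c i * conj' (c j))) := by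
    refine tendsto_finset_sum _ fun i _ => tendsto_finset_sum _ fun j _ => ?_
    have h1 := (NormedSpace.expSeries_div_hasSum_exp (A (x i) (x j))).tendsto_sum_nat
    rw [← Complex.exp_eq_exp_ℂ] at h1
    exact (h1.mul_const _).mul_const _
  exact ge_of_tendsto' hTend hFnn

lemma qfnn_conjScale {A : X → X → ℂ} (hA : QFnn A) (f : X → ℂ) :
    QFnn (fun x y => A x y * f x * conj' (f y)) := by
  intro n x c
  have h := hA n x (fun i => f (x i) * c i)
  calc (0:ℂ) ≤ ∑ i, ∑ j, A (x i) (x j) * (f (x i) * c i) * conj' (f (x j) * c j) := h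
    _ = ∑ i, ∑ j, A (x i) (x j) * f (x i) * conj' (f (x j)) * c i * conj' (c j) := by
        refine Finset.sum_congr rfl fun i _ => Finset.sum_congr rfl fun j _ => ?_
        simp only [_root_.map_mul]
        ring


lemma complex_mul_nonneg {z w : ℂ} (hz : 0 ≤ z) (hw : 0 ≤ w) : 0 ≤ z * w :=
  mul_nonneg hz hw

/-- The reduced kernel at a base point. -/
def Kred (N : X → X → ℂ) (x₀ : X) : X → X → ℂ := fun a b =>
  N a x₀ + conj' (N b x₀) - N a b - N x₀ x₀

lemma Kred_herm {N : X → X → ℂ} (hN : ∀ x y, N y x = conj' (N x y)) (x₀ : X) :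
    ∀ a b, Kred N x₀ b a = conj' (Kred N x₀ a b) := by
  intro a b
  simp only [Kred, map_sub, map_add, Complex.conj_conj, ← hN x₀ x₀, ← hN a b]
  ring

lemma Kred_qfnn {N : X → X → ℂ} (hN : ∀ x y, N y x = conj' (N x y))
    (hNeg : ∀ (n : ℕ) (x : Fin n → X) (c : Fin n → ℂ), (∑ i, c i) = 0 →
      ∑ i, ∑ j, N (x i) (x j) * c i * conj' (c j) ≤ 0) (x₀ : X) :
    QFnn (Kred N x₀) := by
  intro n x c
  set S := ∑ i, c i with hS
  have hsum : ∑ i, (Fin.cons (-S) c : Fin (n+1) → ℂ) i = 0 := by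
    rw [Fin.sum_cons, ← hS, neg_add_cancel]
  have h := hNeg (n + 1) (Fin.cons x₀ x) (Fin.cons (-S) c) hsum
  have expand : ∑ i, ∑ j, N ((Fin.cons x₀ x : Fin (n+1) → X) i) ((Fin.cons x₀ x : Fin (n+1) → X) j)
        * (Fin.cons (-S) c : Fin (n+1) → ℂ) i * conj' ((Fin.cons (-S) c : Fin (n+1) → ℂ) j)
      = (N x₀ x₀ * (-S) * conj' (-S) + ∑ j, N x₀ (x j) * (-S) * conj' (c j))
        + (∑ i, N (x i) x₀ * c i * conj' (-S)
          + ∑ i, ∑ j, N (x i) (x j) * c i * conj' (c j)) := by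
    rw [Fin.sum_univ_succ]
    congr 1
    · rw [Fin.sum_univ_succ]
      simp [Fin.cons_zero, Fin.cons_succ]
    · rw [← Finset.sum_add_distrib]
      refine Finset.sum_congr rfl fun i _ => ?_
      rw [Fin.sum_univ_succ]
      simp [Fin.cons_zero, Fin.cons_succ]
  have T1 : N x₀ x₀ * (-S) * conj' (-S) = ∑ i, ∑ j, N x₀ x₀ * (c i * conj' (c j)) := by
    have e : S * conj' S = ∑ i, ∑ j, c i * conj' (c j) := by
      rw [hS, map_sum, Finset.sum_mul_sum]
    rw [map_neg]
    calc N x₀ x₀ * -S * -conj' S = N x₀ x₀ * (S * conj' S) := by ring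
      _ = N x₀ x₀ * ∑ i, ∑ j, c i * conj' (c j) := by rw [e]
      _ = ∑ i, ∑ j, N x₀ x₀ * (c i * conj' (c j)) := by
          rw [Finset.mul_sum]
          exact Finset.sum_congr rfl fun i _ => Finset.mul_sum _ _ _
  have T2 : ∑ j, N x₀ (x j) * (-S) * conj' (c j)
      = ∑ i, ∑ j, -(N x₀ (x j) * (c i * conj' (c j))) := by
    rw [Finset.sum_comm]
    refine Finset.sum_congr rfl fun j _ => ?_
    rw [hS, Finset.sum_neg_distrib, ← Finset.mul_sum, ← Finset.sum_mul]
    ring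
  have T3 : ∑ i, N (x i) x₀ * c i * conj' (-S)
      = ∑ i, ∑ j, -(N (x i) x₀ * (c i * conj' (c j))) := by
    refine Finset.sum_congr rfl fun i _ => ?_
    rw [hS, Finset.sum_neg_distrib, ← Finset.mul_sum, map_neg, map_sum]
    simp only [← Finset.mul_sum]
    ring
  have key : ∑ i, ∑ j, Kred N x₀ (x i) (x j) * c i * conj' (c j)
      + ∑ i, ∑ j, N ((Fin.cons x₀ x : Fin (n+1) → X) i) ((Fin.cons x₀ x : Fin (n+1) → X) j)
          * (Fin.cons (-S) c : Fin (n+1) → ℂ) i * conj' ((Fin.cons (-S) c : Fin (n+1) → ℂ) j) = 0 := by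
    rw [expand, T1, T2, T3]
    simp only [← Finset.sum_add_distrib]
    refine Finset.sum_eq_zero fun i _ => Finset.sum_eq_zero fun j _ => ?_
    simp only [Kred]
    rw [herm_conj hN x₀ (x j)]
    ring
  have hfin := eq_neg_of_add_eq_zero_left key
  rw [hfin]
  exact neg_nonneg.mpr h


lemma posdef_of_negdef {N : X → X → ℂ} (hN : ∀ x y, N y x = conj' (N x y))
    (hNeg : ∀ (n : ℕ) (x : Fin n → X) (c : Fin n → ℂ), (∑ i, c i) = 0 →
      ∑ i, ∑ j, N (x i) (x j) * c i * conj' (c j) ≤ 0)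
    {t : ℝ} (ht : 0 < t) :
    QFnn (fun x y => Complex.exp (-(t : ℂ) * N x y)) := by
  by_cases hX : Nonempty X
  · obtain ⟨x₀⟩ := hX
    have hKH := Kred_herm hN x₀
    have hKQ := Kred_qfnn hN hNeg x₀
    have htKH : ∀ a b, (t : ℂ) * Kred N x₀ b a = conj' ((t : ℂ) * Kred N x₀ a b) := by
      intro a b
      rw [_root_.map_mul, Complex.conj_ofReal, hKH a b]
    have htKQ : QFnn (fun a b => (t : ℂ) * Kred N x₀ a b) := by
      intro n x c
      have e : ∑ i, ∑ j, (t : ℂ) * Kred N x₀ (x i) (x j) * c i * conj' (c j)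
          = (t : ℂ) * ∑ i, ∑ j, Kred N x₀ (x i) (x j) * c i * conj' (c j) := by
        simp only [Finset.mul_sum]
        refine Finset.sum_congr rfl fun i _ => Finset.sum_congr rfl fun j _ => ?_
        ring
      rw [e]
      exact mul_nonneg (by rw [Complex.zero_le_real]; exact ht.le) (hKQ n x c)
    have hExp := qfnn_exp htKH htKQ
    set g : X → ℂ := fun a => Complex.exp (-(t : ℂ) * N a x₀ + (t : ℂ) * N x₀ x₀ / 2) with hg
    have hScaled := qfnn_conjScale hExp g
    have hiden : (fun a b => Complex.exp ((t : ℂ) * Kred N x₀ a b) * g a * conj' (g b))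
        = fun a b => Complex.exp (-(t : ℂ) * N a b) := by
      funext a b
      have hcg : conj' (g b)
          = Complex.exp (-(t : ℂ) * conj' (N b x₀) + (t : ℂ) * N x₀ x₀ / 2) := by
        rw [hg, ← Complex.exp_conj]
        congr 1
        simp only [map_add, _root_.map_mul, map_neg, map_div₀, Complex.conj_ofReal,
          ← hN x₀ x₀, map_ofNat]
      rw [hcg, ← Complex.exp_add, ← Complex.exp_add]
      congr 1
      simp only [Kred]
      ring
    rw [hiden] at hScaled
    exact hScaled
  · intro n x c
    cases n with
    | zero => simp
    | succ m => exact absurd ⟨x 0⟩ hX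

lemma negdef_of_posdef {N : X → X → ℂ}
    (hPos : ∀ t : ℝ, 0 < t → QFnn (fun x y => Complex.exp (-(t : ℂ) * N x y))) :
    ∀ (n : ℕ) (x : Fin n → X) (c : Fin n → ℂ), (∑ i, c i) = 0 →
      ∑ i, ∑ j, N (x i) (x j) * c i * conj' (c j) ≤ 0 := by
  intro n x c hc
  have hslope : ∀ z : ℂ, Filter.Tendsto (fun t : ℝ => (Complex.exp (-(t : ℂ) * z) - 1) / (t : ℂ))
      (nhdsWithin 0 (Set.Ioi (0:ℝ))) (nhds (-z)) := by
    intro z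
    have hu : HasDerivAt (fun s : ℝ => -(s : ℂ) * z) (-z) 0 := by
      have h0 := Complex.ofRealCLM.hasDerivAt (x := (0 : ℝ))
      simpa [neg_mul, Pi.neg_def] using ((h0.mul_const z).neg)
    have hf' : HasDerivAt (fun s : ℝ => Complex.exp (-(s : ℂ) * z)) (-z) 0 := by
      simpa using hu.cexp
    have h2 := (hasDerivAt_iff_tendsto_slope.mp hf').mono_left
      (nhdsWithin_mono 0 (fun s hs => ne_of_gt hs))
    refine h2.congr' ?_
    filter_upwards [self_mem_nhdsWithin] with s _
    simp [slope_def_module, Complex.exp_zero, Complex.real_smul, div_eq_inv_mul]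
  have hT : Filter.Tendsto
      (fun t : ℝ => ∑ i, ∑ j, ((Complex.exp (-(t : ℂ) * N (x i) (x j)) - 1) / (t : ℂ))
        * c i * conj' (c j))
      (nhdsWithin 0 (Set.Ioi (0:ℝ)))
      (nhds (∑ i, ∑ j, -N (x i) (x j) * c i * conj' (c j))) := by
    refine tendsto_finset_sum _ fun i _ => tendsto_finset_sum _ fun j _ => ?_
    exact ((hslope _).mul_const _).mul_const _
  have hS0 : ∑ i, ∑ j, c i * conj' (c j) = 0 := by
    have e := Finset.sum_mul_sum Finset.univ Finset.univ c (fun j => conj' (c j))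
    rw [← e, hc, zero_mul]
  have hnn : ∀ t ∈ Set.Ioi (0:ℝ),
      0 ≤ ∑ i, ∑ j, ((Complex.exp (-(t : ℂ) * N (x i) (x j)) - 1) / (t : ℂ))
        * c i * conj' (c j) := by
    intro t ht
    have e : ∑ i, ∑ j, ((Complex.exp (-(t : ℂ) * N (x i) (x j)) - 1) / (t : ℂ))
          * c i * conj' (c j)
        = ((t : ℂ))⁻¹ * (∑ i, ∑ j, Complex.exp (-(t : ℂ) * N (x i) (x j)) * c i * conj' (c j))
          - ((t : ℂ))⁻¹ * (∑ i, ∑ j, c i * conj' (c j)) := by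
      calc ∑ i, ∑ j, ((Complex.exp (-(t : ℂ) * N (x i) (x j)) - 1) / (t : ℂ)) * c i * conj' (c j)
          = ∑ i, ∑ j, (((t : ℂ))⁻¹ * (Complex.exp (-(t : ℂ) * N (x i) (x j)) * c i * conj' (c j))
              - ((t : ℂ))⁻¹ * (c i * conj' (c j))) := by
            refine Finset.sum_congr rfl fun i _ => Finset.sum_congr rfl fun j _ => ?_
            rw [div_eq_inv_mul]
            ring
        _ = _ := by
            simp only [Finset.sum_sub_distrib, ← Finset.mul_sum]
    rw [e, hS0, mul_zero, sub_zero]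
    refine mul_nonneg ?_ (hPos t ht n x c)
    rw [← Complex.ofReal_inv, Complex.zero_le_real]
    exact inv_nonneg.mpr (Set.mem_Ioi.mp ht).le
  have hlim := ge_of_tendsto hT (eventually_nhdsWithin_of_forall hnn)
  have e2 : ∑ i, ∑ j, -N (x i) (x j) * c i * conj' (c j)
      = -(∑ i, ∑ j, N (x i) (x j) * c i * conj' (c j)) := by
    simp [neg_mul, Finset.sum_neg_distrib]
  rw [e2] at hlim
  exact neg_nonneg.mp hlim

end Schoenberg

/-- Schoenberg's theorem: a kernel `N` on a set `X` is negative definite if and only if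
`exp (-t • N)` is positive definite for every `t > 0`. -/
theorem negDef_iff_exp_posDef {X : Type*} (N : X → X → ℂ) (hN : IsHermKernel N) :
    IsNegDefKernelC N ↔
      ∀ t : ℝ, 0 < t → IsPosDefKernelC (fun x y => Complex.exp (-(t : ℂ) * N x y)) := by
  constructor
  · intro hNeg t ht
    refine ⟨?_, ?_⟩
    · intro a b
      show Complex.exp (-(t : ℂ) * N b a) = starRingEnd ℂ (Complex.exp (-(t : ℂ) * N a b))
      rw [← Complex.exp_conj]
      congr 1
      simp [map_neg, _root_.map_mul, Complex.conj_ofReal, ← hN a b]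
    · exact Schoenberg.posdef_of_negdef hN hNeg.2 ht
  · intro hPos
    exact ⟨hN, Schoenberg.negdef_of_posdef (fun t ht => (hPos t ht).2)⟩
end

section
/- Let X be a set and let K : X × X → ℝ be a symmetric function. Then K is a positive definite kernel if and only if there exist a real Hilbert space H and a mapping T : X → H such that K(x,y) = ⟨T(x), T(y)⟩ for all x, y ∈ X. -/
/-- A symmetric real-valued function on `X × X` is a positive definite kernel. -/
def IsPosDefKernel {X : Type*} (K : X → X → ℝ) : Prop :=
  (∀ x y, K x y = K y x) ∧
  ∀ (n : ℕ) (x : Fin n → X) (c : Fin n → ℝ),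
    0 ≤ ∑ i, ∑ j, K (x i) (x j) * c i * c j

universe u

section Aux
variable {X : Type u}

open Finsupp

/-- The bilinear form on finitely supported functions induced by a kernel. -/
noncomputable def kerB (K : X → X → ℝ) : (X →₀ ℝ) →ₗ[ℝ] (X →₀ ℝ) →ₗ[ℝ] ℝ :=
  Finsupp.linearCombination ℝ fun x => Finsupp.linearCombination ℝ (K x)

lemma kerB_single_single (K : X → X → ℝ) (x y : X) :
    kerB K (Finsupp.single x 1) (Finsupp.single y 1) = K x y := by
  simp [kerB, Finsupp.linearCombination_single]

lemma kerB_apply (K : X → X → ℝ) (f g : X →₀ ℝ) :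
    kerB K f g = ∑ x ∈ f.support, ∑ y ∈ g.support, K x y * f x * g y := by
  simp only [kerB, Finsupp.linearCombination_apply, Finsupp.sum, LinearMap.coe_sum,
    Finset.sum_apply, LinearMap.smul_apply, smul_eq_mul, Finset.mul_sum]
  refine Finset.sum_congr rfl fun x _ => Finset.sum_congr rfl fun y _ => by ring

lemma kerB_symm (K : X → X → ℝ) (hsym : ∀ x y, K x y = K y x) (f g : X →₀ ℝ) :
    kerB K f g = kerB K g f := by
  rw [kerB_apply, kerB_apply, Finset.sum_comm]
  refine Finset.sum_congr rfl fun y _ => Finset.sum_congr rfl fun x _ => by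
    rw [hsym]; ring

lemma kerB_self_nonneg (K : X → X → ℝ) (hK : IsPosDefKernel K) (f : X →₀ ℝ) :
    0 ≤ kerB K f f := by
  rw [kerB_apply]
  have h := hK.2 f.support.card (fun i => (f.support.equivFin.symm i : X))
    (fun i => f (f.support.equivFin.symm i))
  refine h.trans_eq ?_
  rw [← Finset.sum_coe_sort f.support (fun x => ∑ y ∈ f.support, K x y * f x * f y),
    ← Equiv.sum_comp f.support.equivFin.symm]
  refine Finset.sum_congr rfl fun i _ => ?_
  rw [← Finset.sum_coe_sort f.support
      (fun y => K _ y * f _ * f y),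
    ← Equiv.sum_comp f.support.equivFin.symm]

section Quot
variable (K : X → X → ℝ) (hK : IsPosDefKernel K)

/-- The null space of the kernel bilinear form. -/
noncomputable abbrev kerN : Submodule ℝ (X →₀ ℝ) := LinearMap.ker (kerB K)

include hK in
lemma mem_kerN_of_self_eq_zero (f : X →₀ ℝ) (h : kerB K f f = 0) : f ∈ kerN K := by
  -- Cauchy–Schwarz for the positive semidefinite form
  letI pre : PreInnerProductSpace.Core ℝ (X →₀ ℝ) :=
    { inner := fun f g => kerB K f g
      conj_inner_symm := fun f g => by simpa using kerB_symm K hK.1 g f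
      re_inner_nonneg := fun f => by simpa using kerB_self_nonneg K hK f
      add_left := fun f g h => by simp
      smul_left := fun f g r => by simp [mul_comm] }
  rw [LinearMap.mem_ker]
  refine LinearMap.ext fun g => ?_
  have cs := @InnerProductSpace.Core.inner_mul_inner_self_le ℝ (X →₀ ℝ) _ _ _ pre f g
  change |kerB K f g| * |kerB K g f| ≤ kerB K f f * kerB K g g at cs
  rw [kerB_symm K hK.1 g f, h, zero_mul] at cs
  rw [LinearMap.zero_apply]
  nlinarith [abs_nonneg (kerB K f g), le_abs_self (kerB K f g), neg_abs_le (kerB K f g)]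

/-- The quotient of `X →₀ ℝ` by the null space. -/
noncomputable abbrev kerQ : Type u := (X →₀ ℝ) ⧸ (kerN K)

/-- The descended bilinear form on the quotient. -/
noncomputable def kerQB (hsym : ∀ x y, K x y = K y x) : kerQ K →ₗ[ℝ] kerQ K →ₗ[ℝ] ℝ :=
  (kerN K).liftQ
    { toFun := fun f => (kerN K).liftQ (kerB K f)
        (fun g hg => by
          rw [LinearMap.mem_ker] at hg ⊢
          rw [kerB_symm K hsym f g, hg]; rfl)
      map_add' := fun f g => Submodule.linearMap_qext _ (by ext h; simp)
      map_smul' := fun r f => Submodule.linearMap_qext _ (by ext h; simp) }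
    (fun f hf => by
      rw [LinearMap.mem_ker] at hf ⊢
      refine Submodule.linearMap_qext _ ?_
      ext g
      simp [hf])

lemma kerQB_mk_mk (hsym : ∀ x y, K x y = K y x) (f g : X →₀ ℝ) :
    kerQB K hsym (Submodule.Quotient.mk f) (Submodule.Quotient.mk g) = kerB K f g := by
  erw [kerQB, Submodule.liftQ_apply, LinearMap.coe_mk, AddHom.coe_mk]

end Quot

/-- The inner product space core on the quotient. -/
noncomputable def kerCore {X : Type u} (K : X → X → ℝ) (hK : IsPosDefKernel K) : InnerProductSpace.Core ℝ (kerQ K) :=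
  { inner := fun p q => kerQB K hK.1 p q
    conj_inner_symm := fun p q => by
      obtain ⟨f, rfl⟩ := Submodule.Quotient.mk_surjective _ p
      obtain ⟨g, rfl⟩ := Submodule.Quotient.mk_surjective _ q
      simp [kerQB_mk_mk, kerB_symm K hK.1 g f]
    re_inner_nonneg := fun p => by
      obtain ⟨f, rfl⟩ := Submodule.Quotient.mk_surjective _ p
      simpa [kerQB_mk_mk] using kerB_self_nonneg K hK f
    add_left := fun p q r => by simp
    smul_left := fun p q r => by simp [mul_comm]
    definite := fun p hp => by
      obtain ⟨f, rfl⟩ := Submodule.Quotient.mk_surjective _ p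
      rw [Submodule.Quotient.mk_eq_zero]
      exact mem_kerN_of_self_eq_zero K hK f (by rw [← kerQB_mk_mk K hK.1 f f]; exact hp) }


end Aux

/-- A symmetric function `K : X × X → ℝ` is a positive definite kernel if and only if there
exist a real Hilbert space `H` and a mapping `T : X → H` such that
`K x y = ⟪T x, T y⟫` for all `x, y`. -/
theorem posDefKernel_iff_inner {X : Type u} (K : X → X → ℝ)
    (hsym : ∀ x y, K x y = K y x) :
    IsPosDefKernel K ↔
      ∃ (H : Type u) (_ : NormedAddCommGroup H) (_ : InnerProductSpace ℝ H)
        (_ : CompleteSpace H) (T : X → H),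
        ∀ x y, K x y = @inner ℝ H _ (T x) (T y) := by
  constructor
  · intro hK
    letI core := kerCore K hK
    letI : NormedAddCommGroup (kerQ K) := core.toNormedAddCommGroup
    letI : InnerProductSpace ℝ (kerQ K) := InnerProductSpace.ofCore core.toCore
    refine ⟨UniformSpace.Completion (kerQ K), inferInstance, inferInstance, inferInstance,
      fun x => UniformSpace.Completion.coe' (α := kerQ K)
        (Submodule.Quotient.mk (Finsupp.single x 1)), fun x y => ?_⟩
    rw [UniformSpace.Completion.inner_coe]
    have h2 : (inner ℝ (Submodule.Quotient.mk (Finsupp.single x 1) : kerQ K)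
        (Submodule.Quotient.mk (Finsupp.single y 1)) : ℝ)
        = kerQB K hK.1 (Submodule.Quotient.mk (Finsupp.single x 1))
            (Submodule.Quotient.mk (Finsupp.single y 1)) := rfl
    rw [h2, kerQB_mk_mk, kerB_single_single]
  · rintro ⟨H, _, _, _, T, hT⟩
    refine ⟨hsym, fun n x c => ?_⟩
    have h : ∑ i, ∑ j, K (x i) (x j) * c i * c j
        = inner ℝ (∑ i, c i • T (x i)) (∑ j, c j • T (x j)) := by
      rw [sum_inner]
      refine Finset.sum_congr rfl fun i _ => ?_
      rw [inner_sum]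
      refine Finset.sum_congr rfl fun j _ => ?_
      rw [real_inner_smul_left, real_inner_smul_right, ← hT]
      ring
    rw [h]
    exact real_inner_self_nonneg
end

section
/- Every real Hilbert space uniformly embeds into the unit sphere of a real Hilbert space. -/
open Finset
open scoped Nat

private lemma sum_pow_expand {κ : Type*} [Fintype κ] (u : κ → ℝ) (n : ℕ) :
    (∑ k, u k) ^ n = ∑ g : Fin n → κ, ∏ m, u (g m) := by
  induction n with
  | zero => simp
  | succ n ih =>
    rw [pow_succ, ih,
      ← Fintype.sum_equiv (Fin.consEquiv (fun _ : Fin (n + 1) => κ))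
        (fun p : κ × (Fin n → κ) => u p.1 * ∏ m, u (p.2 m))
        (fun h : Fin (n + 1) → κ => ∏ m, u (h m))
        (fun p => by simp [Fin.prod_univ_succ]),
      Fintype.sum_prod_type]
    rw [Finset.sum_mul_sum]
    rw [Finset.sum_comm]
    exact Finset.sum_congr rfl fun k _ => Finset.sum_congr rfl fun g _ => by ring

private lemma gram_pow_nonneg {ι E : Type*} [NormedAddCommGroup E] [InnerProductSpace ℝ E]
    (s : Finset ι) (x : ι → E) (b : ι → ℝ) (n : ℕ) :
    0 ≤ ∑ i ∈ s, ∑ j ∈ s, b i * b j * (inner ℝ (x i) (x j) : ℝ) ^ n := by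
  classical
  set V : Submodule ℝ E := Submodule.span ℝ ((s.image x : Finset E) : Set E) with hV
  have hxV : ∀ i ∈ s, x i ∈ V := fun i hi =>
    Submodule.subset_span (Finset.mem_coe.2 (Finset.mem_image_of_mem x hi))
  set B := stdOrthonormalBasis ℝ V with hB
  set c : ι → Fin (Module.finrank ℝ V) → ℝ := fun i k => inner ℝ (x i) ((B k : V) : E) with hc
  have key : ∀ i ∈ s, ∀ j ∈ s, (inner ℝ (x i) (x j) : ℝ) = ∑ k, c i k * c j k := by
    intro i hi j hj
    have h := B.sum_inner_mul_inner (⟨x i, hxV i hi⟩ : V) (⟨x j, hxV j hj⟩ : V)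
    simp only [Submodule.coe_inner] at h
    rw [← h]
    refine Finset.sum_congr rfl fun k _ => ?_
    congr 1
    exact real_inner_comm _ _
  have expand : ∀ i ∈ s, ∀ j ∈ s, (inner ℝ (x i) (x j) : ℝ) ^ n
      = ∑ g : Fin n → Fin (Module.finrank ℝ V), (∏ m, c i (g m)) * (∏ m, c j (g m)) := by
    intro i hi j hj
    rw [key i hi j hj, sum_pow_expand]
    exact Finset.sum_congr rfl fun g _ => by rw [← Finset.prod_mul_distrib]
  have main : ∑ i ∈ s, ∑ j ∈ s, b i * b j * (inner ℝ (x i) (x j) : ℝ) ^ n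
      = ∑ g : Fin n → Fin (Module.finrank ℝ V),
          (∑ i ∈ s, b i * ∏ m, c i (g m)) ^ 2 := by
    have h1 : ∀ i ∈ s, ∑ j ∈ s, b i * b j * (inner ℝ (x i) (x j) : ℝ) ^ n
        = ∑ g : Fin n → Fin (Module.finrank ℝ V), ∑ j ∈ s,
            (b i * ∏ m, c i (g m)) * (b j * ∏ m, c j (g m)) := by
      intro i hi
      have h2 : ∀ j ∈ s, b i * b j * (inner ℝ (x i) (x j) : ℝ) ^ n
          = ∑ g : Fin n → Fin (Module.finrank ℝ V),
              (b i * ∏ m, c i (g m)) * (b j * ∏ m, c j (g m)) := by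
        intro j hj
        rw [expand i hi j hj, Finset.mul_sum]
        exact Finset.sum_congr rfl fun g _ => by ring
      rw [Finset.sum_congr rfl h2, Finset.sum_comm]
    rw [Finset.sum_congr rfl h1, Finset.sum_comm]
    refine Finset.sum_congr rfl fun g _ => ?_
    rw [sq, Finset.sum_mul_sum]
  rw [main]
  exact Finset.sum_nonneg fun g _ => sq_nonneg _

private lemma gaussian_psd {ι H : Type*} [NormedAddCommGroup H] [InnerProductSpace ℝ H]
    (s : Finset ι) (x : ι → H) (a : ι → ℝ) :
    0 ≤ ∑ i ∈ s, ∑ j ∈ s, a i * a j * Real.exp (-‖x i - x j‖ ^ 2) := by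
  classical
  set b : ι → ℝ := fun i => a i * Real.exp (-‖x i‖ ^ 2) with hb
  have hk : ∀ i j, a i * a j * Real.exp (-‖x i - x j‖ ^ 2)
      = b i * b j * Real.exp (2 * (inner ℝ (x i) (x j) : ℝ)) := by
    intro i j
    rw [hb]
    simp only []
    rw [norm_sub_sq_real, show -(‖x i‖ ^ 2 - 2 * (inner ℝ (x i) (x j) : ℝ) + ‖x j‖ ^ 2)
        = (-‖x i‖ ^ 2) + (2 * (inner ℝ (x i) (x j) : ℝ) + (-‖x j‖ ^ 2)) by ring,
      Real.exp_add, Real.exp_add]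
    ring
  simp_rw [hk]
  have hexp : ∀ t : ℝ, HasSum (fun n : ℕ => t ^ n / n !) (Real.exp t) := fun t => by
    rw [Real.exp_eq_exp_ℝ]
    exact NormedSpace.expSeries_div_hasSum_exp t
  have main : HasSum
      (fun n : ℕ => ∑ i ∈ s, ∑ j ∈ s,
        b i * b j * ((2 * (inner ℝ (x i) (x j) : ℝ)) ^ n / n !))
      (∑ i ∈ s, ∑ j ∈ s, b i * b j * Real.exp (2 * (inner ℝ (x i) (x j) : ℝ))) := by
    refine hasSum_sum fun i _ => hasSum_sum fun j _ => ?_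
    exact (hexp _).mul_left _
  refine hasSum_le (fun n => ?_) hasSum_zero main
  have h1 : ∑ i ∈ s, ∑ j ∈ s, b i * b j * ((2 * (inner ℝ (x i) (x j) : ℝ)) ^ n / n !)
      = (2 ^ n / n !) * ∑ i ∈ s, ∑ j ∈ s, b i * b j * (inner ℝ (x i) (x j) : ℝ) ^ n := by
    rw [Finset.mul_sum]
    refine Finset.sum_congr rfl fun i _ => ?_
    rw [Finset.mul_sum]
    refine Finset.sum_congr rfl fun j _ => ?_
    rw [mul_pow]
    ring
  show (0 : ℝ) ≤ _
  rw [h1]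
  have h2 : (0:ℝ) ≤ 2 ^ n / n ! := by positivity
  exact mul_nonneg h2 (gram_pow_nonneg s x b n)

universe u

/-- Every real Hilbert space uniformly embeds into the unit sphere of a real Hilbert
space. -/
theorem hilbert_unifEmb_into_sphere
    (H : Type u) [NormedAddCommGroup H] [InnerProductSpace ℝ H] [CompleteSpace H] :
    ∃ (H' : Type u) (_ : NormedAddCommGroup H') (_ : InnerProductSpace ℝ H')
      (_ : CompleteSpace H') (T : H → H'),
      (∀ x, ‖T x‖ = 1) ∧
      IsUnifEmb (fun x y => dist x y) (fun u v => dist u v) T := by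
  classical
  set k : H → H → ℝ := fun x y => Real.exp (-‖x - y‖ ^ 2) with hkdef
  set V := (H →₀ ℝ) with hVdef
  letI c : PreInnerProductSpace.Core ℝ V :=
  { inner := fun f g => f.sum fun x r => g.sum fun y t => r * t * k x y
    conj_inner_symm := by
      intro f g
      have hks : ∀ x y : H, k x y = k y x := fun x y => by
        simp only [hkdef]; rw [norm_sub_rev]
      simp only [starRingEnd_apply, star_trivial, Finsupp.sum]
      rw [Finset.sum_comm]
      refine Finset.sum_congr rfl fun x _ => Finset.sum_congr rfl fun y _ => ?_
      rw [hks y x]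
      ring
    re_inner_nonneg := by
      intro f
      simp only [RCLike.re_to_real]
      rw [Finsupp.sum]
      have : ∀ x ∈ f.support, (f.sum fun y t => f x * t * k x y)
          = ∑ y ∈ f.support, f x * f y * k x y := by
        intro x _
        rw [Finsupp.sum]
      rw [Finset.sum_congr rfl this]
      exact gaussian_psd f.support id f
    add_left := by
      intro f g h
      refine Finsupp.sum_add_index' (fun x => ?_) (fun x r₁ r₂ => ?_)
      · rw [Finsupp.sum]
        refine Finset.sum_eq_zero fun y _ => by ring
      · rw [Finsupp.sum, Finsupp.sum, Finsupp.sum, ← Finset.sum_add_distrib]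
        refine Finset.sum_congr rfl fun y _ => by ring
    smul_left := by
      intro f g r
      simp only [starRingEnd_apply, star_trivial]
      rw [Finsupp.sum_smul_index (fun i => by
          rw [Finsupp.sum]; exact Finset.sum_eq_zero fun y _ => by ring),
        Finsupp.mul_sum]
      refine Finsupp.sum_congr fun x _ => ?_
      rw [Finsupp.mul_sum]
      refine Finsupp.sum_congr fun y _ => by ring }
  letI : SeminormedAddCommGroup V := @InnerProductSpace.Core.toSeminormedAddCommGroup ℝ V _ _ _ c
  letI : NormedSpace ℝ V := @InnerProductSpace.Core.toNormedSpace ℝ V _ _ _ c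
  letI : InnerProductSpace ℝ V :=
  { ‹NormedSpace ℝ V› with
    inner := c.inner
    norm_sq_eq_re_inner := fun x => by
      have h : ‖x‖ = Real.sqrt (RCLike.re (c.inner x x)) := rfl
      rw [h, Real.sq_sqrt (c.re_inner_nonneg x)]
    conj_inner_symm := c.conj_inner_symm
    add_left := c.add_left
    smul_left := by intro x y r; exact c.smul_left x y r }
  set W := SeparationQuotient V with hWdef
  set H' := UniformSpace.Completion W with hH'def
  set T : H → H' := fun x =>
    ((SeparationQuotient.mk (Finsupp.single x 1) : W) : H') with hTdef
  have hinner : ∀ x y : H, (inner ℝ (T x) (T y) : ℝ) = k x y := by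
    intro x y
    rw [hTdef]
    simp only []
    rw [UniformSpace.Completion.inner_coe]
    rw [SeparationQuotient.inner_mk_mk]
    show c.inner (Finsupp.single x 1) (Finsupp.single y 1) = k x y
    show (Finsupp.single x 1).sum
        (fun a r => (Finsupp.single y 1).sum fun b t => r * t * k a b) = k x y
    rw [Finsupp.sum_single_index, Finsupp.sum_single_index]
    · ring
    · ring
    · rw [Finsupp.sum_single_index] <;> ring
  have hnorm : ∀ x : H, ‖T x‖ = 1 := by
    intro x
    have h2 : ‖T x‖ ^ 2 = 1 := by
      rw [@norm_sq_eq_re_inner ℝ, hinner, hkdef]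
      simp
    nlinarith [norm_nonneg (T x)]
  have hdist : ∀ x y : H, dist (T x) (T y) ^ 2
      = 2 - 2 * Real.exp (-(dist x y) ^ 2) := by
    intro x y
    rw [dist_eq_norm, norm_sub_sq_real, hinner, hnorm, hnorm, dist_eq_norm, hkdef]
    ring
  refine ⟨H', inferInstance, inferInstance, inferInstance, T, hnorm, ?_, ?_, ?_⟩
  · -- injective
    intro x y hxy
    have h0 : dist (T x) (T y) = 0 := by rw [hxy]; exact dist_self _
    have h1 := hdist x y
    rw [h0] at h1
    have h2 : Real.exp (-(dist x y) ^ 2) = 1 := by nlinarith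
    rw [Real.exp_eq_one_iff] at h2
    have h3 : dist x y = 0 := by nlinarith [dist_nonneg (x := x) (y := y)]
    exact dist_eq_zero.mp h3
  · -- forward uniform continuity
    intro ε hε
    refine ⟨ε / 2, by linarith, fun x y hxy => ?_⟩
    have h1 := hdist x y
    have h2 : 1 - Real.exp (-(dist x y) ^ 2) ≤ (dist x y) ^ 2 := by
      nlinarith [Real.add_one_le_exp (-(dist x y) ^ 2)]
    have h3 : dist (T x) (T y) ^ 2 < ε ^ 2 := by
      nlinarith [dist_nonneg (x := x) (y := y)]
    exact lt_of_pow_lt_pow_left₀ 2 (le_of_lt hε) h3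
  · -- backward uniform continuity
    intro ε hε
    refine ⟨Real.sqrt (2 - 2 * Real.exp (-ε ^ 2)), ?_, fun x y hxy => ?_⟩
    · have : Real.exp (-ε ^ 2) < 1 := by
        rw [Real.exp_lt_one_iff]
        nlinarith
      exact Real.sqrt_pos.mpr (by linarith)
    · by_contra hcon
      push_neg at hcon
      have h1 : Real.exp (-(dist x y) ^ 2) ≤ Real.exp (-ε ^ 2) := by
        apply Real.exp_le_exp.mpr
        nlinarith
      have h2 : 2 - 2 * Real.exp (-ε ^ 2) ≤ dist (T x) (T y) ^ 2 := by
        rw [hdist]; linarith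
      have h3 : Real.sqrt (2 - 2 * Real.exp (-ε ^ 2)) ≤ dist (T x) (T y) := by
        calc Real.sqrt (2 - 2 * Real.exp (-ε ^ 2))
            ≤ Real.sqrt (dist (T x) (T y) ^ 2) := Real.sqrt_le_sqrt h2
          _ = dist (T x) (T y) := Real.sqrt_sq dist_nonneg
      linarith
end

section
/- If a metric space uniformly embeds into a real Hilbert space, then it uniformly embeds into the unit sphere of a real Hilbert space. -/
open scoped RealInnerProductSpace Nat

set_option linter.unusedSectionVars false

universe u


/-- Positive semidefinite kernel on a fintype. -/
private def PSDK {ι : Type*} [Fintype ι] (K : ι → ι → ℝ) : Prop :=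
  ∀ c : ι → ℝ, 0 ≤ ∑ i, ∑ j, c i * c j * K i j

lemma psd_inner {ι : Type*} [Fintype ι] {H : Type*} [NormedAddCommGroup H]
    [InnerProductSpace ℝ H] (u : ι → H) : PSDK (fun i j => ⟪u i, u j⟫) := by
  intro c
  have : ∑ i, ∑ j, c i * c j * ⟪u i, u j⟫ = ⟪∑ i, c i • u i, ∑ j, c j • u j⟫ := by
    rw [sum_inner]
    refine Finset.sum_congr rfl fun i _ => ?_
    rw [inner_sum]
    refine Finset.sum_congr rfl fun j _ => ?_
    rw [real_inner_smul_left, real_inner_smul_right]; ring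
  rw [this]
  exact real_inner_self_nonneg

open scoped MatrixOrder in
lemma psd_mul {ι : Type*} [Fintype ι] [DecidableEq ι] {K₁ K₂ : ι → ι → ℝ}
    (hsym : ∀ i j, K₁ i j = K₁ j i) (h₁ : PSDK K₁) (h₂ : PSDK K₂) :
    PSDK (fun i j => K₁ i j * K₂ i j) := by
  intro c
  set A : Matrix ι ι ℝ := Matrix.of K₁ with hA
  have hApsd : A.PosSemidef := by
    refine Matrix.posSemidef_iff_dotProduct_mulVec.mpr ⟨?_, ?_⟩
    · ext i j
      simp [Matrix.conjTranspose, hA, hsym j i]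
    · intro x
      have := h₁ x
      simp only [dotProduct, Matrix.mulVec, dotProduct, star, Finset.mul_sum]
      calc (0:ℝ) ≤ ∑ i, ∑ j, x i * x j * K₁ i j := this
        _ = _ := by
          refine Finset.sum_congr rfl fun i _ => Finset.sum_congr rfl fun j _ => ?_
          simp [hA]; ring
  set S := CFC.sqrt A with hS
  have hSsym : ∀ i j, S i j = S j i := by
    intro i j
    have := (Matrix.nonneg_iff_posSemidef.mp (CFC.sqrt_nonneg A)).1
    calc S i j = S.conjTranspose i j := by rw [this]
      _ = S j i := by simp [Matrix.conjTranspose]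
  have hfac : ∀ i j, K₁ i j = ∑ k, S i k * S j k := by
    intro i j
    have := CFC.sqrt_mul_sqrt_self A hApsd.nonneg
    have h' : (S * S) i j = A i j := by rw [this]
    rw [Matrix.mul_apply] at h'
    rw [show (A i j : ℝ) = K₁ i j from rfl] at h'
    rw [← h']
    exact Finset.sum_congr rfl fun k _ => by rw [hSsym k j]
  calc (0:ℝ) ≤ ∑ k, ∑ i, ∑ j, (c i * S i k) * (c j * S j k) * K₂ i j := by
        exact Finset.sum_nonneg fun k _ => h₂ (fun i => c i * S i k)
    _ = ∑ i, ∑ j, c i * c j * (K₁ i j * K₂ i j) := by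
        rw [Finset.sum_comm]
        refine Finset.sum_congr rfl fun i _ => ?_
        rw [Finset.sum_comm]
        refine Finset.sum_congr rfl fun j _ => ?_
        rw [hfac i j, Finset.sum_mul, Finset.mul_sum]
        exact Finset.sum_congr rfl fun k _ => by ring

lemma psd_pow {ι : Type*} [Fintype ι] [DecidableEq ι] {H : Type*} [NormedAddCommGroup H]
    [InnerProductSpace ℝ H] (u : ι → H) (n : ℕ) : PSDK (fun i j => ⟪u i, u j⟫ ^ n) := by
  induction n with
  | zero =>
    intro c
    have : ∑ i, ∑ j, c i * c j * (⟪u i, u j⟫ ^ 0) = (∑ i, c i) * (∑ j, c j) := by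
      rw [Finset.sum_mul]
      exact Finset.sum_congr rfl fun i _ => by rw [Finset.mul_sum]; simp
    rw [this, ← sq]
    positivity
  | succ n ih =>
    have := psd_mul (K₁ := fun i j => ⟪u i, u j⟫) (K₂ := fun i j => ⟪u i, u j⟫ ^ n)
      (fun i j => real_inner_comm _ _) (psd_inner u) ih
    intro c
    have h' := this c
    calc (0:ℝ) ≤ ∑ i, ∑ j, c i * c j * (⟪u i, u j⟫ * ⟪u i, u j⟫ ^ n) := h'
      _ = _ := by
        refine Finset.sum_congr rfl fun i _ => Finset.sum_congr rfl fun j _ => ?_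
        simp only [pow_succ]; ring



lemma psd_gauss {ι : Type*} [Fintype ι] [DecidableEq ι] {H : Type*} [NormedAddCommGroup H]
    [InnerProductSpace ℝ H] (u : ι → H) :
    ∀ c : ι → ℝ, 0 ≤ ∑ i, ∑ j, c i * c j * Real.exp (-‖u i - u j‖ ^ 2) := by
  intro c
  set v : ι → H := fun i => (Real.sqrt 2) • u i with hv
  set d : ι → ℝ := fun i => c i * Real.exp (-‖u i‖ ^ 2) with hd
  have hvin : ∀ i j, ⟪v i, v j⟫ = 2 * ⟪u i, u j⟫ := by
    intro i j
    rw [hv]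
    simp only [real_inner_smul_left, real_inner_smul_right, ← mul_assoc]
    rw [Real.mul_self_sqrt (by norm_num)]
  have key : ∀ i j, c i * c j * Real.exp (-‖u i - u j‖ ^ 2)
      = d i * d j * Real.exp ⟪v i, v j⟫ := by
    intro i j
    rw [hvin i j, hd]
    have : ‖u i - u j‖ ^ 2 = ‖u i‖ ^ 2 - 2 * ⟪u i, u j⟫ + ‖u j‖ ^ 2 :=
      norm_sub_sq_real (u i) (u j)
    rw [this]
    rw [show -(‖u i‖ ^ 2 - 2 * ⟪u i, u j⟫ + ‖u j‖ ^ 2)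
        = (-‖u i‖ ^ 2) + (-‖u j‖ ^ 2) + 2 * ⟪u i, u j⟫ by ring]
    rw [Real.exp_add, Real.exp_add]
    ring
  have hsum : ∀ (x : ℝ), Real.exp x = ∑' n : ℕ, x ^ n / n ! := by
    intro x
    rw [Real.exp_eq_exp_ℝ, NormedSpace.exp_eq_tsum_div]
  calc (0:ℝ) ≤ ∑' n : ℕ, ∑ i, ∑ j, d i * d j * (⟪v i, v j⟫ ^ n / n !) := by
        refine tsum_nonneg fun n => ?_
        have h1 : ∑ i, ∑ j, d i * d j * (⟪v i, v j⟫ ^ n / n !)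
            = (∑ i, ∑ j, d i * d j * ⟪v i, v j⟫ ^ n) / n ! := by
          rw [Finset.sum_div]
          refine Finset.sum_congr rfl fun i _ => ?_
          rw [Finset.sum_div]
          refine Finset.sum_congr rfl fun j _ => ?_
          ring
        rw [h1]
        exact div_nonneg (psd_pow v n d) (by positivity)
    _ = ∑ i, ∑ j, ∑' n : ℕ, d i * d j * (⟪v i, v j⟫ ^ n / n !) := by
        rw [Summable.tsum_finsetSum]
        · refine Finset.sum_congr rfl fun i _ => ?_
          rw [Summable.tsum_finsetSum]
          intro j _
          exact (Real.summable_pow_div_factorial _).mul_left _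
        · intro i _
          exact summable_sum fun j _ => (Real.summable_pow_div_factorial _).mul_left _
    _ = ∑ i, ∑ j, c i * c j * Real.exp (-‖u i - u j‖ ^ 2) := by
        refine Finset.sum_congr rfl fun i _ => Finset.sum_congr rfl fun j _ => ?_
        rw [key i j, hsum ⟪v i, v j⟫, tsum_mul_left]


section Kernel

variable {M : Type*} (K : M → M → ℝ)

/-- The semi-inner-product on finitely supported functions induced by a kernel. -/
noncomputable def kInner (f g : M →₀ ℝ) : ℝ :=
  f.sum fun x a => a * (g.sum fun y b => b * K x y)

lemma kInner_eq (f g : M →₀ ℝ) :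
    kInner K f g = ∑ x ∈ f.support, ∑ y ∈ g.support, f x * g y * K x y := by
  unfold kInner
  rw [Finsupp.sum]
  refine Finset.sum_congr rfl fun x _ => ?_
  rw [Finsupp.sum, Finset.mul_sum]
  exact Finset.sum_congr rfl fun y _ => by ring

lemma kInner_add_left (f g h : M →₀ ℝ) :
    kInner K (f + g) h = kInner K f h + kInner K g h := by
  unfold kInner
  exact Finsupp.sum_add_index' (fun x => zero_mul _) (fun x a b => add_mul a b _)

lemma kInner_smul_left (r : ℝ) (f g : M →₀ ℝ) :
    kInner K (r • f) g = r * kInner K f g := by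
  unfold kInner
  rw [Finsupp.sum_smul_index (fun i => zero_mul (g.sum fun y b => b * K i y)), Finsupp.mul_sum]
  exact Finset.sum_congr rfl fun x _ => by ring

lemma kInner_symm (hsym : ∀ x y, K x y = K y x) (f g : M →₀ ℝ) :
    kInner K f g = kInner K g f := by
  rw [kInner_eq, kInner_eq, Finset.sum_comm]
  exact Finset.sum_congr rfl fun y _ => Finset.sum_congr rfl fun x _ => by rw [hsym]; ring

lemma kInner_nonneg
    (hPSD : ∀ (s : Finset M) (c : M → ℝ), 0 ≤ ∑ x ∈ s, ∑ y ∈ s, c x * c y * K x y)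
    (f : M →₀ ℝ) : 0 ≤ kInner K f f := by
  rw [kInner_eq]
  exact hPSD f.support f

lemma kInner_single (x y : M) :
    kInner K (Finsupp.single x 1) (Finsupp.single y 1) = K x y := by
  rw [kInner_eq, Finsupp.support_single_ne_zero x one_ne_zero,
    Finsupp.support_single_ne_zero y one_ne_zero, Finset.sum_singleton, Finset.sum_singleton,
    Finsupp.single_eq_same, Finsupp.single_eq_same, one_mul, one_mul]

end Kernel


section PSDbridge
variable {M : Type*} {H : Type*} [NormedAddCommGroup H] [InnerProductSpace ℝ H]


lemma psd_gauss_finset (T : M → H) (s : Finset M) (c : M → ℝ) :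
    0 ≤ ∑ x ∈ s, ∑ y ∈ s, c x * c y * Real.exp (-‖T x - T y‖ ^ 2) := by
  classical
  set g : M → M → ℝ := fun x y => c x * c y * Real.exp (-‖T x - T y‖ ^ 2) with hg
  have h0 := psd_gauss (ι := ↥s) (fun i => T ↑i) (fun i => c ↑i)
  calc (0:ℝ) ≤ ∑ i : ↥s, ∑ j : ↥s, g ↑i ↑j := h0
    _ = ∑ i : ↥s, ∑ y ∈ s, g ↑i y := by
        exact Finset.sum_congr rfl fun i _ => Finset.sum_coe_sort s (g ↑i)
    _ = ∑ x ∈ s, ∑ y ∈ s, g x y := Finset.sum_coe_sort s (fun x => ∑ y ∈ s, g x y)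

end PSDbridge




/-- If a metric space uniformly embeds into a real Hilbert space, then it uniformly embeds
into the unit sphere of a real Hilbert space. -/
theorem unifEmb_hilbert_implies_unifEmb_sphere
    (M : Type u) [MetricSpace M]
    (h : ∃ (H : Type u) (_ : NormedAddCommGroup H) (_ : InnerProductSpace ℝ H)
      (_ : CompleteSpace H) (T : M → H),
      IsUnifEmb (fun x y => dist x y) (fun u v => dist u v) T) :
    ∃ (H' : Type u) (_ : NormedAddCommGroup H') (_ : InnerProductSpace ℝ H')
      (_ : CompleteSpace H') (T : M → H'),
      (∀ x, ‖T x‖ = 1) ∧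
      IsUnifEmb (fun x y => dist x y) (fun u v => dist u v) T := by
  classical
  obtain ⟨H, _, _, _, T, hTinj, hTfwd, hTbwd⟩ := h
  set K : M → M → ℝ := fun x y => Real.exp (-‖T x - T y‖ ^ 2) with hK
  have hKsym : ∀ x y, K x y = K y x := by
    intro x y; simp only [hK, norm_sub_rev]
  have hKone : ∀ x, K x x = 1 := by
    intro x; simp [hK]
  have hKle : ∀ x y, K x y ≤ 1 := by
    intro x y
    have : -‖T x - T y‖ ^ 2 ≤ 0 := neg_nonpos.mpr (by positivity)
    simpa [hK] using Real.exp_le_one_iff.mpr this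
  -- the pre-inner-product space
  letI core : PreInnerProductSpace.Core ℝ (M →₀ ℝ) :=
    { inner := kInner K
      conj_inner_symm := fun f g => by
        simp only [starRingEnd_apply, star_trivial]
        exact kInner_symm K hKsym g f
      re_inner_nonneg := fun f => by
        simpa using kInner_nonneg K (psd_gauss_finset T) f
      add_left := fun f g h => by
        simpa using kInner_add_left K f g h
      smul_left := fun f g r => by
        simpa [starRingEnd_apply] using kInner_smul_left K r f g }
  letI : SeminormedAddCommGroup (M →₀ ℝ) := @InnerProductSpace.Core.toSeminormedAddCommGroup ℝ _ _ _ _ core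
  letI : NormedSpace ℝ (M →₀ ℝ) := @InnerProductSpace.Core.toNormedSpace ℝ _ _ _ _ core
  letI : InnerProductSpace ℝ (M →₀ ℝ) :=
    { core with
      norm_sq_eq_re_inner := fun f => by
        have h₁ : ‖f‖ ^ 2 = Real.sqrt (RCLike.re (core.inner f f)) ^ 2 := rfl
        have h₂ : (0:ℝ) ≤ RCLike.re (core.inner f f) := core.re_inner_nonneg f
        rw [h₁, Real.sq_sqrt h₂] }
  -- quotient and completion
  set Q := SeparationQuotient (M →₀ ℝ) with hQ
  set H' := UniformSpace.Completion Q with hH'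
  set T' : M → H' := fun x => ((SeparationQuotient.mk (Finsupp.single x 1) : Q) : H') with hT'
  have hinn : ∀ x y : M, ⟪T' x, T' y⟫ = K x y := by
    intro x y
    calc ⟪T' x, T' y⟫
        = ⟪(SeparationQuotient.mk (Finsupp.single x 1) : Q),
            (SeparationQuotient.mk (Finsupp.single y 1) : Q)⟫ :=
          UniformSpace.Completion.inner_coe _ _
      _ = ⟪(Finsupp.single x 1 : M →₀ ℝ), (Finsupp.single y 1 : M →₀ ℝ)⟫ := rfl
      _ = K x y := kInner_single K x y
  have hnorm : ∀ x, ‖T' x‖ = 1 := by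
    intro x
    have h1 : ‖T' x‖ ^ 2 = 1 := by
      rw [← real_inner_self_eq_norm_sq, hinn, hKone]
    nlinarith [norm_nonneg (T' x)]
  have hdistsq : ∀ x y, dist (T' x) (T' y) ^ 2 = 2 - 2 * Real.exp (-(dist (T x) (T y)) ^ 2) := by
    intro x y
    rw [dist_eq_norm, norm_sub_sq_real, hinn, hnorm, hnorm, dist_eq_norm]
    simp only [hK]
    ring
  refine ⟨H', inferInstance, inferInstance, inferInstance, T', hnorm, ?_, ?_, ?_⟩
  · -- injectivity
    intro x y hxy
    have h0 : dist (T' x) (T' y) = 0 := by rw [hxy, dist_self]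
    have h1 : Real.exp (-(dist (T x) (T y)) ^ 2) = 1 := by
      have := hdistsq x y
      rw [h0] at this
      nlinarith [this]
    have h2 : -(dist (T x) (T y)) ^ 2 = 0 := Real.exp_injective (by rwa [Real.exp_zero])
    have h3 : dist (T x) (T y) = 0 := by nlinarith [dist_nonneg (x := T x) (y := T y)]
    exact hTinj (by rwa [dist_eq_zero] at h3)
  · -- forward uniform continuity
    intro ε hε
    obtain ⟨δ, hδ, hδ'⟩ := hTfwd (ε / 2) (by positivity)
    refine ⟨δ, hδ, fun x y hxy => ?_⟩
    have hb : dist (T x) (T y) < ε / 2 := hδ' x y hxy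
    have hb0 : (0:ℝ) ≤ dist (T x) (T y) := dist_nonneg
    have ha0 : (0:ℝ) ≤ dist (T' x) (T' y) := dist_nonneg
    have ha2 := hdistsq x y
    have hexp : -(dist (T x) (T y)) ^ 2 + 1 ≤ Real.exp (-(dist (T x) (T y)) ^ 2) :=
      Real.add_one_le_exp _
    nlinarith [ha2, hexp, hb, hb0, ha0, hε]
  · -- backward uniform continuity
    intro ε hε
    obtain ⟨δ₁, hδ₁, hb⟩ := hTbwd ε hε
    have hexplt : Real.exp (-δ₁ ^ 2) < 1 := by
      rw [← Real.exp_zero]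
      exact Real.exp_lt_exp.mpr (by nlinarith)
    refine ⟨Real.sqrt (2 - 2 * Real.exp (-δ₁ ^ 2)), Real.sqrt_pos.mpr (by nlinarith), ?_⟩
    intro x y hxy
    have key : dist (T' x) (T' y) ^ 2 < 2 - 2 * Real.exp (-δ₁ ^ 2) := by
      have h1 : dist (T' x) (T' y) ^ 2 < Real.sqrt (2 - 2 * Real.exp (-δ₁ ^ 2)) ^ 2 :=
        pow_lt_pow_left₀ hxy dist_nonneg (by norm_num)
      rwa [Real.sq_sqrt (by nlinarith)] at h1
    have ha2 := hdistsq x y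
    have h2 : Real.exp (-δ₁ ^ 2) < Real.exp (-(dist (T x) (T y)) ^ 2) := by nlinarith
    have h3 : -δ₁ ^ 2 < -(dist (T x) (T y)) ^ 2 := Real.exp_lt_exp.mp h2
    have h4 : dist (T x) (T y) < δ₁ := by
      nlinarith [dist_nonneg (x := T x) (y := T y)]
    exact hb x y h4
end

section
/- Let X be a real vector space (or more generally an abelian group) and let f : X → ℝ be a negative definite function with f(0) = 0. Then for every x ∈ X and every n ∈ ℕ one has f(n•x) ≤ n²·f(x). -/
/-- A symmetric real-valued function on `X × X` is a negative definite kernel. -/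
def IsNegDefKernel {X : Type*} (N : X → X → ℝ) : Prop :=
  (∀ x y, N x y = N y x) ∧
  ∀ (n : ℕ) (x : Fin n → X) (c : Fin n → ℝ), (∑ i, c i) = 0 →
    ∑ i, ∑ j, N (x i) (x j) * c i * c j ≤ 0

/-- If `f` is a negative definite function on an abelian group `X` with `f 0 = 0`, then
`f (n • x) ≤ n ^ 2 * f x` for every `x ∈ X` and `n ∈ ℕ`. -/
theorem negDef_nsmul_le {X : Type*} [AddCommGroup X] (f : X → ℝ)
    (hf : IsNegDefKernel (fun x y => f (x - y))) (h0 : f 0 = 0) :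
    ∀ (x : X) (n : ℕ), f (n • x) ≤ (n : ℝ) ^ 2 * f x := by
  obtain ⟨hsym, hneg⟩ := hf
  have hfneg : ∀ z : X, f (-z) = f z := by
    intro z
    have := hsym 0 z
    simpa using this
  intro x n
  induction n with
  | zero => simp [h0]
  | succ n ih =>
    rcases Nat.eq_zero_or_pos n with rfl | hn
    · simp
    have key := hneg 3 ![(n + 1) • x, x, 0] ![1, -(1 + (n : ℝ)), (n : ℝ)] (by
      simp [Fin.sum_univ_three])
    simp only [Fin.sum_univ_three, Matrix.cons_val_zero, Matrix.cons_val_one,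
      Matrix.head_cons, Matrix.cons_val_two, Matrix.tail_cons, sub_self, sub_zero,
      zero_sub, h0] at key
    have h1 : (n + 1) • x - x = n • x := by
      rw [succ_nsmul]; abel
    have h2 : x - (n + 1) • x = -(n • x) := by
      rw [succ_nsmul]; abel
    rw [h1, h2] at key
    simp only [hfneg] at key
    have hn' : (0 : ℝ) < n := by exact_mod_cast hn
    push_cast
    nlinarith [key, hn', mul_le_mul_of_nonneg_left ih (by positivity : (0:ℝ) ≤ 1 + n)]
end

section
/- Let X be an abelian group and let f : X → ℝ be a negative definite function with f(0) = 0. Then f takes nonnegative values and for all x, y ∈ X one has √(f(x+y)) ≤ √(f(x)) + √(f(y)). -/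
/-- If `f` is a negative definite function on an abelian group `X` with `f 0 = 0`, then `f`
is nonnegative and `√(f (x + y)) ≤ √(f x) + √(f y)` for all `x, y`. -/
theorem negDef_sqrt_subadditive {X : Type*} [AddCommGroup X] (f : X → ℝ)
    (hf : IsNegDefKernel (fun x y => f (x - y))) (h0 : f 0 = 0) :
    (∀ x, 0 ≤ f x) ∧
    ∀ x y : X, Real.sqrt (f (x + y)) ≤ Real.sqrt (f x) + Real.sqrt (f y) := by
  obtain ⟨hsymm, hneg⟩ := hf
  have feven : ∀ x : X, f (-x) = f x := by
    intro x
    have := hsymm 0 x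
    simpa using this
  have key : ∀ (x y : X) (a b : ℝ),
      0 ≤ f x * a ^ 2 + (f x + f y - f (x - y)) * (a * b) + f y * b ^ 2 := by
    intro x y a b
    have h := hneg 3 ![0, x, y] ![-(a + b), a, b] (by
      rw [Fin.sum_univ_three]; simp)
    have hyx : f (y - x) = f (x - y) := by rw [← neg_sub]; exact feven _
    simp [Fin.sum_univ_three, sub_self, sub_zero, zero_sub, h0, feven, hyx] at h
    nlinarith [h]
  have hnonneg : ∀ x, 0 ≤ f x := by
    intro x
    have := key x 0 1 0
    simpa using this
  have tri : ∀ x y : X, Real.sqrt (f (x - y)) ≤ Real.sqrt (f x) + Real.sqrt (f y) := by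
    intro x y
    have hd : discrim (f x) (f x + f y - f (x - y)) (f y) ≤ 0 := by
      apply discrim_le_zero
      intro t
      have h := key x y t 1
      ring_nf at h ⊢
      linarith
    rw [discrim] at hd
    have hsx := Real.sq_sqrt (hnonneg x)
    have hsy := Real.sq_sqrt (hnonneg y)
    have hnx := Real.sqrt_nonneg (f x)
    have hny := Real.sqrt_nonneg (f y)
    have h1 : (f x + f y - f (x - y)) ^ 2 ≤ (2 * Real.sqrt (f x) * Real.sqrt (f y)) ^ 2 := by
      nlinarith [hsx, hsy, hd]
    have h2 : |f x + f y - f (x - y)| ≤ 2 * Real.sqrt (f x) * Real.sqrt (f y) := by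
      have h3 := Real.sqrt_le_sqrt h1
      rwa [Real.sqrt_sq_eq_abs, Real.sqrt_sq (by positivity)] at h3
    have habs : -(f x + f y - f (x - y)) ≤ 2 * Real.sqrt (f x) * Real.sqrt (f y) :=
      le_trans (neg_le_abs _) h2
    have hle : f (x - y) ≤ (Real.sqrt (f x) + Real.sqrt (f y)) ^ 2 := by nlinarith
    calc Real.sqrt (f (x - y)) ≤ Real.sqrt ((Real.sqrt (f x) + Real.sqrt (f y)) ^ 2) :=
          Real.sqrt_le_sqrt hle
      _ = Real.sqrt (f x) + Real.sqrt (f y) := Real.sqrt_sq (by positivity)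
  refine ⟨hnonneg, fun x y => ?_⟩
  have hxy : x + y = x - -y := by abel
  rw [hxy]
  calc Real.sqrt (f (x - -y)) ≤ Real.sqrt (f x) + Real.sqrt (f (-y)) := tri x (-y)
    _ = Real.sqrt (f x) + Real.sqrt (f y) := by rw [feven]
end

section
/- Let 0 < p ≤ 1, let X be a nonzero p-normed space, and let f : X → ℝ be a negative definite function with f(0) = 0. For t > 0 set ρ_f(t) = inf{ f(x) : x ∈ X, ‖x‖^p ≥ t }. If ρ_f(t₀) > 0 for some t₀ > 0, then ρ_f(t) > 0 for every t > 0. -/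
/-- `ρ_f t = inf {f x : ‖x‖ ^ p ≥ t}`. -/
noncomputable def rhoInf {X : Type*} (nrm : X → ℝ) (p : ℝ) (f : X → ℝ) (t : ℝ) : ℝ :=
  sInf (f '' {x | t ≤ nrm x ^ p})

/-- Let `X` be a nonzero `p`-normed space (`0 < p ≤ 1`) and let `f : X → ℝ` be a negative
definite function with `f 0 = 0`. If `ρ_f t₀ > 0` for some `t₀ > 0`, then `ρ_f t > 0` for
every `t > 0`. -/
theorem rhoInf_pos_of_pos
    (p : ℝ) (hp0 : 0 < p) (hp1 : p ≤ 1)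
    (X : Type*) [AddCommGroup X] [Module ℝ X] (nrm : X → ℝ)
    (hnrm_nonneg : ∀ x, 0 ≤ nrm x)
    (hnrm_zero : ∀ x, nrm x = 0 ↔ x = 0)
    (hnrm_smul : ∀ (a : ℝ) (x : X), nrm (a • x) = |a| * nrm x)
    (hnrm_tri : ∀ x y, nrm (x + y) ^ p ≤ nrm x ^ p + nrm y ^ p)
    (hX : ∃ x : X, x ≠ 0)
    (f : X → ℝ) (hf : IsNegDefKernel (fun x y => f (x - y))) (h0 : f 0 = 0)
    (hpos : ∃ t₀ > (0 : ℝ), 0 < rhoInf nrm p f t₀) :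
    ∀ t > (0 : ℝ), 0 < rhoInf nrm p f t := by
  obtain ⟨hsymm, hnd⟩ := hf
  have heven : ∀ x : X, f (-x) = f x := by
    intro x
    have := hsymm 0 x
    simpa using this
  have hnonneg : ∀ x : X, 0 ≤ f x := by
    intro x
    have := hnd 2 ![x, 0] ![1, -1] (by simp)
    simp [Fin.sum_univ_two, h0, heven] at this
    linarith
  have h3 : ∀ (u v : X) (c₁ c₂ : ℝ),
      f (u - v) * c₁ * c₂ ≤ (c₁ + c₂) * (f u * c₁ + f v * c₂) := by
    intro u v c₁ c₂
    have := hnd 3 ![u, v, 0] ![c₁, c₂, -(c₁+c₂)] (by simp [Fin.sum_univ_three])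
    simp [Fin.sum_univ_three, sub_self, h0] at this
    have hsym' : f (v - u) = f (u - v) := hsymm v u
    rw [hsym', heven u, heven v] at this
    nlinarith [this]
  -- `f (n • x) ≤ n ^ 2 * f x`
  have hmul : ∀ (n : ℕ) (x : X), f ((n : ℝ) • x) ≤ (n : ℝ) ^ 2 * f x := by
    intro n x
    induction n with
    | zero => simp [h0]
    | succ k ih =>
      rcases Nat.eq_zero_or_pos k with hk | hk
      · subst hk; simp
      · have hkR : (0 : ℝ) < (k : ℝ) := by exact_mod_cast hk
        have key := h3 ((k : ℝ) • x) (-x) 1 (k : ℝ)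
        have hsub : (k : ℝ) • x - (-x) = ((k + 1 : ℕ) : ℝ) • x := by
          push_cast
          rw [add_smul, one_smul]
          abel
        rw [hsub, heven] at key
        push_cast at key ⊢
        nlinarith [key, ih, hnonneg x, hkR,
          mul_le_mul_of_nonneg_left ih (by linarith : (0:ℝ) ≤ 1 + (k:ℝ))]
  -- the defining sets are nonempty
  obtain ⟨x₀, hx₀⟩ := hX
  have hnx₀ : 0 < nrm x₀ := lt_of_le_of_ne (hnrm_nonneg x₀)
    (fun h => hx₀ ((hnrm_zero x₀).mp h.symm))
  have hne : ∀ s : ℝ, 0 < s → ∃ x : X, s ≤ nrm x ^ p := by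
    intro s hs
    refine ⟨(s ^ (1/p) / nrm x₀) • x₀, ?_⟩
    have h1 : nrm ((s ^ (1/p) / nrm x₀) • x₀) = s ^ (1/p) := by
      rw [hnrm_smul, abs_of_nonneg (by positivity), div_mul_cancel₀]
      exact ne_of_gt hnx₀
    have h2 : (s ^ (1/p)) ^ p = s := by
      rw [← Real.rpow_mul hs.le, one_div, inv_mul_cancel₀ hp0.ne', Real.rpow_one]
    rw [h1, h2]
  obtain ⟨t₀, ht₀, hρ⟩ := hpos
  intro t ht
  obtain ⟨m, hm⟩ := exists_nat_ge ((t₀ / t) ^ (1/p))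
  set n : ℕ := m + 1 with hn_def
  have hnR : (0:ℝ) < (n:ℝ) := by positivity
  have h1 : (t₀ / t) ^ (1/p) ≤ (n:ℝ) := hm.trans (by rw [hn_def]; push_cast; linarith)
  have h2 : t₀ / t ≤ (n:ℝ) ^ p := by
    calc t₀ / t = ((t₀ / t) ^ (1/p)) ^ p := by
          rw [← Real.rpow_mul (by positivity), one_div, inv_mul_cancel₀ hp0.ne',
            Real.rpow_one]
      _ ≤ (n:ℝ) ^ p := Real.rpow_le_rpow (by positivity) h1 hp0.le
  have hn : t₀ ≤ (n:ℝ) ^ p * t := by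
    have := mul_le_mul_of_nonneg_right h2 ht.le
    rw [div_mul_cancel₀ _ ht.ne'] at this
    exact this
  have hbdd : BddBelow (f '' {x | t₀ ≤ nrm x ^ p}) := by
    refine ⟨0, ?_⟩
    rintro y ⟨x, hx, rfl⟩
    exact hnonneg x
  have hkey : ∀ x : X, t ≤ nrm x ^ p → rhoInf nrm p f t₀ / (n:ℝ) ^ 2 ≤ f x := by
    intro x hx
    have hmem : t₀ ≤ nrm ((n:ℝ) • x) ^ p := by
      rw [hnrm_smul, abs_of_nonneg hnR.le, Real.mul_rpow hnR.le (hnrm_nonneg x)]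
      calc t₀ ≤ (n:ℝ) ^ p * t := hn
        _ ≤ (n:ℝ) ^ p * nrm x ^ p := mul_le_mul_of_nonneg_left hx (by positivity)
    have hA : rhoInf nrm p f t₀ ≤ f ((n:ℝ) • x) := csInf_le hbdd ⟨_, hmem, rfl⟩
    have hB := hmul n x
    rw [div_le_iff₀ (by positivity)]
    nlinarith [hA, hB]
  obtain ⟨y, hy⟩ := hne t ht
  have hfinal : rhoInf nrm p f t₀ / (n:ℝ) ^ 2 ≤ rhoInf nrm p f t := by
    refine le_csInf ⟨f y, y, hy, rfl⟩ ?_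
    rintro b ⟨x, hx, rfl⟩
    exact hkey x hx
  have : 0 < rhoInf nrm p f t₀ / (n:ℝ) ^ 2 := by positivity
  linarith
end

section
/- Let 0 < p ≤ 1, let X be a nonzero p-normed space, and let f : X → ℝ be a negative definite function with f(0) = 0. For t > 0 set ρ_f(t) = inf{ f(x) : x ∈ X, ‖x‖^p ≥ t }. Then for all 0 < t < s one has ρ_f(s) ≤ (4·ρ_f(t)/t^(2/p))·s^(2/p). -/
lemma negdef_even {X : Type*} [AddCommGroup X] (f : X → ℝ)
    (hf : IsNegDefKernel (fun x y => f (x - y))) : ∀ x : X, f (-x) = f x := by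
  intro x
  have hsym := hf.1 x 0
  simpa using hsym.symm

lemma negdef_nonneg {X : Type*} [AddCommGroup X] (f : X → ℝ)
    (hf : IsNegDefKernel (fun x y => f (x - y))) (h0 : f 0 = 0) : ∀ x, 0 ≤ f x := by
  intro x
  have he := negdef_even f hf x
  have h := hf.2 2 ![x, 0] ![1, -1] (by simp)
  simp [Fin.sum_univ_two, sub_self, h0, sub_zero, zero_sub, he] at h
  linarith

lemma negdef_double {X : Type*} [AddCommGroup X] (f : X → ℝ)
    (hf : IsNegDefKernel (fun x y => f (x - y))) (h0 : f 0 = 0) :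
    ∀ x, f (x + x) ≤ 4 * f x := by
  intro x
  have he := negdef_even f hf
  have h := hf.2 3 ![0, x, x + x] ![1, -2, 1] (by simp [Fin.sum_univ_three]; norm_num)
  have h2 : f (-x - x) = f (x + x) := by rw [show -x - x = -(x + x) by abel, he]
  simp [Fin.sum_univ_three, sub_self, h0, sub_zero, zero_sub, he,
    sub_add_eq_sub_sub, add_sub_cancel_right, h2] at h
  linarith

lemma negdef_pow_double {X : Type*} [AddCommGroup X] [Module ℝ X] (f : X → ℝ)
    (hf : IsNegDefKernel (fun x y => f (x - y))) (h0 : f 0 = 0) :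
    ∀ (n : ℕ) (x : X), f ((2 : ℝ) ^ n • x) ≤ 4 ^ n * f x := by
  intro n x
  induction n with
  | zero => simp
  | succ n ih =>
    have key : (2 : ℝ) ^ (n + 1) • x = (2 : ℝ) ^ n • x + (2 : ℝ) ^ n • x := by
      rw [pow_succ, mul_comm, two_mul, add_smul]
    rw [key]
    calc f ((2:ℝ)^n • x + (2:ℝ)^n • x) ≤ 4 * f ((2:ℝ)^n • x) := negdef_double f hf h0 _
      _ ≤ 4 * (4 ^ n * f x) := by linarith
      _ = 4 ^ (n + 1) * f x := by ring

/-- Let `X` be a nonzero `p`-normed space (`0 < p ≤ 1`) and let `f : X → ℝ` be a negative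
definite function with `f 0 = 0`. Then `ρ_f s ≤ (4 ρ_f t / t ^ (2/p)) * s ^ (2/p)` for all
`0 < t < s`. -/
theorem rhoInf_growth
    (p : ℝ) (hp0 : 0 < p) (hp1 : p ≤ 1)
    (X : Type*) [AddCommGroup X] [Module ℝ X] (nrm : X → ℝ)
    (hnrm_nonneg : ∀ x, 0 ≤ nrm x)
    (hnrm_zero : ∀ x, nrm x = 0 ↔ x = 0)
    (hnrm_smul : ∀ (a : ℝ) (x : X), nrm (a • x) = |a| * nrm x)
    (hnrm_tri : ∀ x y, nrm (x + y) ^ p ≤ nrm x ^ p + nrm y ^ p)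
    (hX : ∃ x : X, x ≠ 0)
    (f : X → ℝ) (hf : IsNegDefKernel (fun x y => f (x - y))) (h0 : f 0 = 0) :
    ∀ t s : ℝ, 0 < t → t < s →
      rhoInf nrm p f s ≤ 4 * rhoInf nrm p f t / t ^ (2 / p) * s ^ (2 / p) := by
  intro t s ht hts
  have hs : 0 < s := ht.trans hts
  have hfnn := negdef_nonneg f hf h0
  -- the sets are nonempty
  have hmem : ∀ u : ℝ, 0 < u → ∃ x : X, u ≤ nrm x ^ p := by
    intro u hu
    obtain ⟨x0, hx0⟩ := hX
    have hc : 0 < nrm x0 :=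
      lt_of_le_of_ne (hnrm_nonneg x0) (fun h => hx0 ((hnrm_zero x0).1 h.symm))
    refine ⟨(u ^ (1/p) / nrm x0) • x0, ?_⟩
    rw [hnrm_smul, abs_of_nonneg (by positivity), div_mul_cancel₀ _ hc.ne',
      ← Real.rpow_mul hu.le, one_div_mul_cancel hp0.ne', Real.rpow_one]
  have hne : ∀ u : ℝ, 0 < u → (f '' {x | u ≤ nrm x ^ p}).Nonempty := by
    intro u hu
    obtain ⟨x, hx⟩ := hmem u hu
    exact ⟨f x, x, hx, rfl⟩
  have hbdd : ∀ u : ℝ, BddBelow (f '' {x | u ≤ nrm x ^ p}) := by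
    intro u
    refine ⟨0, ?_⟩
    rintro y ⟨x, -, rfl⟩
    exact hfnn x
  have hrhot : 0 ≤ rhoInf nrm p f t := by
    refine le_csInf (hne t ht) ?_
    rintro b ⟨x, -, rfl⟩
    exact hfnn x
  -- r and n
  set r : ℝ := (s / t) ^ (1 / p) with hrdef
  have hst1 : 1 < s / t := (one_lt_div ht).2 hts
  have hst0 : (0 : ℝ) < s / t := by positivity
  have hr1 : 1 < r := Real.one_lt_rpow_iff_of_pos hst0 |>.2 (Or.inl ⟨hst1, by positivity⟩)
  have hr0 : 0 < r := lt_trans one_pos hr1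
  have hex : ∃ n : ℕ, r ≤ (2 : ℝ) ^ n := by
    obtain ⟨n, hn⟩ := pow_unbounded_of_one_lt r (by norm_num : (1:ℝ) < 2)
    exact ⟨n, hn.le⟩
  set n : ℕ := Nat.find hex with hndef
  have hn : r ≤ (2 : ℝ) ^ n := Nat.find_spec hex
  have hnpos : 0 < n := by
    rcases Nat.eq_zero_or_pos n with h | h
    · exfalso
      have := hn
      rw [h, pow_zero] at this
      linarith
    · exact h
  have hnlt : (2 : ℝ) ^ (n - 1) < r := by
    have := Nat.find_min hex (by omega : n - 1 < n)
    push_neg at this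
    exact this
  have h2n : (2 : ℝ) ^ n < 2 * r := by
    have : (2 : ℝ) ^ n = 2 * (2 : ℝ) ^ (n - 1) := by
      rw [← pow_succ']
      congr 1
      omega
    rw [this]
    linarith
  have hrp : r ^ p = s / t := by
    rw [hrdef, ← Real.rpow_mul hst0.le, one_div_mul_cancel hp0.ne', Real.rpow_one]
  -- key estimate
  have key : ∀ x : X, t ≤ nrm x ^ p → rhoInf nrm p f s ≤ 4 ^ n * f x := by
    intro x hx
    have hz : s ≤ nrm ((2 : ℝ) ^ n • x) ^ p := by
      rw [hnrm_smul, abs_of_nonneg (by positivity),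
        Real.mul_rpow (by positivity) (hnrm_nonneg x)]
      have h1 : s / t ≤ ((2 : ℝ) ^ n) ^ p := by
        have := Real.rpow_le_rpow hr0.le hn hp0.le
        rwa [hrp] at this
      calc s = (s / t) * t := by field_simp
        _ ≤ ((2 : ℝ) ^ n) ^ p * nrm x ^ p := by
            apply mul_le_mul h1 hx ht.le (by positivity)
    calc rhoInf nrm p f s ≤ f ((2 : ℝ) ^ n • x) := csInf_le (hbdd s) ⟨_, hz, rfl⟩
      _ ≤ 4 ^ n * f x := negdef_pow_double f hf h0 n x
  have hmain : rhoInf nrm p f s ≤ 4 ^ n * rhoInf nrm p f t := by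
    have h1 : rhoInf nrm p f s / 4 ^ n ≤ rhoInf nrm p f t := by
      refine le_csInf (hne t ht) ?_
      rintro b ⟨x, hx, rfl⟩
      rw [div_le_iff₀ (by positivity)]
      calc rhoInf nrm p f s ≤ 4 ^ n * f x := key x hx
        _ = f x * 4 ^ n := by ring
    calc rhoInf nrm p f s = rhoInf nrm p f s / 4 ^ n * 4 ^ n := by
          field_simp
      _ ≤ rhoInf nrm p f t * 4 ^ n := by
          apply mul_le_mul_of_nonneg_right h1 (by positivity)
      _ = 4 ^ n * rhoInf nrm p f t := by ring
  -- bound 4^n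
  have h4n : (4 : ℝ) ^ n ≤ 4 * (s / t) ^ (2 / p) := by
    have heq : (4 : ℝ) ^ n = ((2 : ℝ) ^ n) ^ 2 := by
      rw [← pow_mul, mul_comm, pow_mul]; norm_num
    have hlt : ((2 : ℝ) ^ n) ^ 2 < (2 * r) ^ 2 :=
      pow_lt_pow_left₀ h2n (by positivity) (by norm_num)
    have hr2 : r ^ (2 : ℕ) = (s / t) ^ (2 / p) := by
      rw [hrdef, ← Real.rpow_natCast _ 2, ← Real.rpow_mul hst0.le]
      congr 1
      push_cast
      field_simp
    calc (4 : ℝ) ^ n = ((2 : ℝ) ^ n) ^ 2 := heq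
      _ ≤ (2 * r) ^ 2 := hlt.le
      _ = 4 * r ^ (2 : ℕ) := by ring
      _ = 4 * (s / t) ^ (2 / p) := by rw [hr2]
  have hfinal : rhoInf nrm p f s ≤ 4 * (s / t) ^ (2 / p) * rhoInf nrm p f t :=
    hmain.trans (mul_le_mul_of_nonneg_right h4n hrhot)
  have hdivr : (s / t) ^ (2 / p) = s ^ (2 / p) / t ^ (2 / p) :=
    Real.div_rpow hs.le ht.le _
  calc rhoInf nrm p f s ≤ 4 * (s / t) ^ (2 / p) * rhoInf nrm p f t := hfinal
    _ = 4 * rhoInf nrm p f t / t ^ (2 / p) * s ^ (2 / p) := by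
        rw [hdivr]; ring
end

section
/- Let 0 < p ≤ 1, let X be a nonzero p-normed space with metric d(x,y) = ‖x−y‖^p, and let f : X → ℝ be a positive definite function with f(0) = 1. For t > 0 set g_f(t) = inf{ 1 − f(x) : d(x,0) ≥ t }. Then for all 0 < t < s one has g_f(s) ≤ (4·g_f(t)/t^(2/p))·s^(2/p). -/
/-- `g_f t = inf {1 - f x : d(x, 0) ≥ t}`, where `d(x, 0) = ‖x‖ ^ p`. -/
noncomputable def gInf {X : Type*} (nrm : X → ℝ) (p : ℝ) (f : X → ℝ) (t : ℝ) : ℝ :=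
  sInf ((fun x => 1 - f x) '' {x | t ≤ nrm x ^ p})

/-- Let `X` be a nonzero `p`-normed space (`0 < p ≤ 1`) with metric `d(x,y) = ‖x - y‖ ^ p`,
and let `f : X → ℝ` be a positive definite function with `f 0 = 1`. Then
`g_f s ≤ (4 g_f t / t ^ (2/p)) * s ^ (2/p)` for all `0 < t < s`. -/
theorem gInf_growth
    (p : ℝ) (hp0 : 0 < p) (hp1 : p ≤ 1)
    (X : Type*) [AddCommGroup X] [Module ℝ X] (nrm : X → ℝ)
    (hnrm_nonneg : ∀ x, 0 ≤ nrm x)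
    (hnrm_zero : ∀ x, nrm x = 0 ↔ x = 0)
    (hnrm_smul : ∀ (a : ℝ) (x : X), nrm (a • x) = |a| * nrm x)
    (hnrm_tri : ∀ x y, nrm (x + y) ^ p ≤ nrm x ^ p + nrm y ^ p)
    (hX : ∃ x : X, x ≠ 0)
    (f : X → ℝ) (hf : IsPosDefKernel (fun x y => f (x - y))) (h0 : f 0 = 1) :
    ∀ t s : ℝ, 0 < t → t < s →
      gInf nrm p f s ≤ 4 * gInf nrm p f t / t ^ (2 / p) * s ^ (2 / p) := by
  have hsymm : ∀ z : X, f (-z) = f z := by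
    intro z; have := hf.1 0 z; simpa using this
  -- f is bounded by 1
  have hle1 : ∀ y : X, f y ≤ 1 := by
    intro y
    have h := hf.2 2 ![0, y] ![1, -1]
    simp [Fin.sum_univ_two, h0, hsymm] at h
    linarith
  -- doubling inequality
  have hdbl : ∀ y : X, 1 - f (y + y) ≤ 4 * (1 - f y) := by
    intro y
    have h := hf.2 3 ![0, y, y + y] ![1, -2, 1]
    simp [Fin.sum_univ_three, h0] at h
    have e5 : f (-y + -y) = f (y + y) := by
      rw [show -y + -y = -(y + y) by abel, hsymm]
    rw [hsymm, e5] at h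
    linarith
  -- iterated doubling
  have hpow : ∀ (k : ℕ) (y : X), 1 - f ((2 ^ k : ℕ) • y) ≤ 4 ^ k * (1 - f y) := by
    intro k
    induction k with
    | zero => intro y; simp
    | succ k ih =>
      intro y
      have h2 : (2 ^ (k + 1) : ℕ) • y = (2 ^ k : ℕ) • y + (2 ^ k : ℕ) • y := by
        rw [← two_nsmul, ← mul_nsmul']
        ring_nf
      rw [h2]
      calc 1 - f ((2 ^ k : ℕ) • y + (2 ^ k : ℕ) • y)
          ≤ 4 * (1 - f ((2 ^ k : ℕ) • y)) := hdbl _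
        _ ≤ 4 * (4 ^ k * (1 - f y)) := by
            have := ih y; linarith
        _ = 4 ^ (k + 1) * (1 - f y) := by ring
  -- the sets are nonempty
  have hne : ∀ t : ℝ, ((fun x => 1 - f x) '' {x | t ≤ nrm x ^ p}).Nonempty := by
    intro t
    obtain ⟨x0, hx0⟩ := hX
    have hn0 : 0 < nrm x0 :=
      lt_of_le_of_ne (hnrm_nonneg x0) (fun h => hx0 ((hnrm_zero x0).1 h.symm))
    set a : ℝ := (max t 1) ^ p⁻¹ / nrm x0 with ha
    have hmax : (0:ℝ) < max t 1 := lt_of_lt_of_le one_pos (le_max_right _ _)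
    have hapos : 0 < a := div_pos (Real.rpow_pos_of_pos hmax _) hn0
    refine ⟨1 - f (a • x0), ⟨a • x0, ?_, rfl⟩⟩
    have : nrm (a • x0) = (max t 1) ^ p⁻¹ := by
      rw [hnrm_smul, abs_of_pos hapos, ha, div_mul_cancel₀ _ (ne_of_gt hn0)]
    rw [Set.mem_setOf_eq, this, Real.rpow_inv_rpow (le_of_lt hmax) (ne_of_gt hp0)]
    exact le_max_left _ _
  -- the sets are bounded below by 0
  have hbdd : ∀ t : ℝ, ∀ e ∈ (fun x => 1 - f x) '' {x | t ≤ nrm x ^ p}, (0:ℝ) ≤ e := by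
    rintro t e ⟨x, -, rfl⟩
    simp only
    linarith [hle1 x]
  intro t s ht hts
  have hs : 0 < s := ht.trans hts
  have hgt0 : 0 ≤ gInf nrm p f t := le_csInf (hne t) (hbdd t)
  -- choose k minimal with r < 2^k, where r = (s/t)^(1/p)
  set r : ℝ := (s / t) ^ p⁻¹ with hr
  have hst1 : (1:ℝ) < s / t := (one_lt_div ht).2 hts
  have hrpos : 0 < r := Real.rpow_pos_of_pos (lt_trans one_pos hst1) _
  have hr1 : 1 < r := Real.one_lt_rpow_iff_of_pos (lt_trans one_pos hst1) |>.2
    (Or.inl ⟨hst1, by positivity⟩)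
  have hex : ∃ k : ℕ, r < 2 ^ k := pow_unbounded_of_one_lt r (by norm_num)
  classical
  set k := Nat.find hex with hkdef
  have hk : r < 2 ^ k := Nat.find_spec hex
  have hk1 : 1 ≤ k := by
    rcases Nat.eq_zero_or_pos k with h | h
    · exfalso; rw [h, pow_zero] at hk; linarith
    · exact h
  have hkmin : ¬ (r < 2 ^ (k - 1)) := Nat.find_min hex (by omega)
  push_neg at hkmin
  have h2k : (2:ℝ) ^ k ≤ 2 * r := by
    have : (2:ℝ) ^ k = 2 * 2 ^ (k - 1) := by
      rw [← pow_succ']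
      congr 1
      omega
    rw [this]
    linarith
  -- key: gInf s ≤ 4^k * gInf t
  have hkey : gInf nrm p f s ≤ 4 ^ k * gInf nrm p f t := by
    have h4 : (0:ℝ) < 4 ^ k := by positivity
    rw [← div_le_iff₀' h4]
    apply le_csInf (hne t)
    rintro e ⟨x, hx, rfl⟩
    rw [div_le_iff₀' h4]
    have hxmem : s ≤ nrm ((2 ^ k : ℕ) • x) ^ p := by
      have hcast : ((2 ^ k : ℕ) : ℝ) • x = (2 ^ k : ℕ) • x := by
        exact Nat.cast_smul_eq_nsmul ℝ _ x
      rw [← hcast, hnrm_smul]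
      have habs : |((2 ^ k : ℕ) : ℝ)| = (2:ℝ) ^ k := by
        rw [abs_of_nonneg (by positivity)]
        push_cast; ring
      rw [habs, Real.mul_rpow (by positivity) (hnrm_nonneg x)]
      have h2p : s / t ≤ ((2:ℝ) ^ k) ^ p := by
        have := Real.rpow_le_rpow (le_of_lt hrpos) (le_of_lt hk) (le_of_lt hp0)
        rwa [hr, Real.rpow_inv_rpow (by positivity) (ne_of_gt hp0)] at this
      calc s = (s / t) * t := by field_simp
        _ ≤ ((2:ℝ) ^ k) ^ p * (nrm x ^ p) := by
            apply mul_le_mul h2p hx (le_of_lt ht) (by positivity)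
    have hsle : gInf nrm p f s ≤ 1 - f ((2 ^ k : ℕ) • x) :=
      csInf_le ⟨0, fun e he => hbdd s e he⟩ ⟨(2 ^ k : ℕ) • x, hxmem, rfl⟩
    calc gInf nrm p f s ≤ 1 - f ((2 ^ k : ℕ) • x) := hsle
      _ ≤ 4 ^ k * (1 - f x) := hpow k x
  -- compare 4^k with 4 r^2 and finish
  have h4k : (4:ℝ) ^ k ≤ 4 * r ^ 2 := by
    have : ((2:ℝ) ^ k) ^ 2 ≤ (2 * r) ^ 2 := by
      apply pow_le_pow_left₀ (by positivity) h2k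
    calc (4:ℝ) ^ k = ((2:ℝ) ^ k) ^ 2 := by
          rw [← pow_mul, pow_mul']
          norm_num
      _ ≤ (2 * r) ^ 2 := this
      _ = 4 * r ^ 2 := by ring
  have hr2 : r ^ 2 = s ^ (2 / p) / t ^ (2 / p) := by
    rw [hr, ← Real.rpow_natCast ((s/t) ^ p⁻¹) 2, ← Real.rpow_mul (by positivity),
      Real.div_rpow (le_of_lt hs) (le_of_lt ht)]
    norm_num
    rw [inv_mul_eq_div]
  calc gInf nrm p f s ≤ 4 ^ k * gInf nrm p f t := hkey
    _ ≤ 4 * r ^ 2 * gInf nrm p f t := by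
        apply mul_le_mul_of_nonneg_right h4k hgt0
    _ = 4 * gInf nrm p f t / t ^ (2 / p) * s ^ (2 / p) := by
        rw [hr2]; field_simp
end
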